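/- arXiv:1405.5997 — 6 statements merged into one kernel-verified Lean document; each statement's English description precedes it below -/
import Mathlib

section
/- Let K ≥ 1 be an integer, let λ, μ > 0, and let s ∈ [K/2 + λ/μ, K − log₂ K − 3]. Then any ρ > 0 satisfying s = (λ/μ)ρ + Σ_{k=1}^{K} ν_{ρ,K}(k) lies in [1 − 2^{−K/2}, 1], and consequently P(ρ, K) ≤ 4 √K · 2^{−K/2}. -/
open Finset Real

noncomputable section

/-- Extend a vector `v = (v_0, …, v_K) ∈ ℝ^{K+1}` to `ℕ → ℝ` by zero,
implementing the convention `v_{K+1} = 0`. -/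
def extProfile (K : ℕ) (v : Fin (K + 1) → ℝ) : ℕ → ℝ :=
  fun k => if h : k < K + 1 then v ⟨k, h⟩ else 0

/-- `v = (v_0, …, v_K)` is a two-choice profile for `(ρ, K)`:
`1 = v_0 ≥ v_1 ≥ … ≥ v_K ≥ 0` and, with the convention `v_{K+1} = 0`,
`v_k − v_{k+1} = ρ (v_{k−1}² − v_k²)` for every `1 ≤ k ≤ K`. -/
def IsTwoChoiceProfile (ρ : ℝ) (K : ℕ) (v : Fin (K + 1) → ℝ) : Prop :=
  extProfile K v 0 = 1 ∧
  (∀ k < K, extProfile K v (k + 1) ≤ extProfile K v k) ∧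
  0 ≤ extProfile K v K ∧
  ∀ k, 1 ≤ k → k ≤ K →
    extProfile K v k - extProfile K v (k + 1) =
      ρ * ((extProfile K v (k - 1)) ^ 2 - (extProfile K v k) ^ 2)

/-- When it exists, the unique two-choice profile for `(ρ, K)`, denoted `ν_{ρ,K}`. -/
def nu (ρ : ℝ) (K : ℕ) : Fin (K + 1) → ℝ :=
  Classical.epsilon (IsTwoChoiceProfile ρ K)

/-- `ν_{ρ,K}` viewed as a function on `ℕ` (with `ν_{ρ,K}(K+1) = 0`). -/
def nuV (ρ : ℝ) (K : ℕ) : ℕ → ℝ := extProfile K (nu ρ K)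

/-- `P(ρ, K) = (1 − ν_{ρ,K}(1)) + ν_{ρ,K}(K)`, the limiting proportion of
problematic (empty or full) queues. -/
def propProblematic (ρ : ℝ) (K : ℕ) : ℝ := (1 - nuV ρ K 1) + nuV ρ K K


namespace TCAux

lemma le_of_sq_le_sq {a b : ℝ} (h : a^2 ≤ b^2) (hb : 0 ≤ b) : a ≤ b := by
  by_contra hab
  push_neg at hab
  nlinarith

def seqC (ρ c : ℝ) : ℕ → ℝ
  | 0 => 1
  | k+1 => ρ * ((seqC ρ c k)^2 - c)

lemma seqC_zero (ρ c : ℝ) : seqC ρ c 0 = 1 := rfl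
lemma seqC_succ (ρ c : ℝ) (k : ℕ) : seqC ρ c (k+1) = ρ * ((seqC ρ c k)^2 - c) := rfl

lemma continuous_seqC (ρ : ℝ) : ∀ k, Continuous (fun c => seqC ρ c k)
  | 0 => continuous_const
  | (k+1) => by
      have ih := continuous_seqC ρ k
      simp only [seqC_succ]
      exact continuous_const.mul ((ih.pow 2).sub continuous_id)

lemma seqC_pos (ρ : ℝ) (hρ : 0 < ρ) : ∀ k, 0 < seqC ρ 0 k
  | 0 => one_pos
  | (k+1) => by
      have h := seqC_pos ρ hρ k
      rw [seqC_succ, sub_zero]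
      exact mul_pos hρ (pow_pos h 2)

lemma seqC_anti (ρ : ℝ) (hρ : 0 < ρ) {c c' : ℝ} (hcc : c' ≤ c) :
    ∀ k, (∀ j < k, 0 ≤ seqC ρ c j) → seqC ρ c k ≤ seqC ρ c' k
  | 0, _ => le_refl _
  | (k+1), h => by
      have ih := seqC_anti ρ hρ hcc k (fun j hj => h j (hj.trans (Nat.lt_succ_self k)))
      have hk := h k (Nat.lt_succ_self k)
      rw [seqC_succ, seqC_succ]
      have h2 : (seqC ρ c k)^2 ≤ (seqC ρ c' k)^2 := by nlinarith
      nlinarith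

lemma chain_ge (f : ℕ → ℝ) (K : ℕ) (hstep : ∀ n, n < K → f (n+1) ≤ f n) :
    ∀ m n, m ≤ n → n ≤ K → f n ≤ f m := by
  intro m n hmn hnK
  induction n with
  | zero =>
    have : m = 0 := by omega
    rw [this]
  | succ n ih =>
    rcases Nat.eq_or_lt_of_le hmn with h | h
    · rw [h]
    · exact (hstep n (by omega)).trans (ih (by omega) (by omega))

lemma chain_ge' (f : ℕ → ℝ) (K : ℕ) (hstep : ∀ n, n < K → f n ≤ f (n+1)) :
    ∀ m n, m ≤ n → n ≤ K → f m ≤ f n := by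
  intro m n hmn hnK
  induction n with
  | zero =>
    have : m = 0 := by omega
    rw [this]
  | succ n ih =>
    rcases Nat.eq_or_lt_of_le hmn with h | h
    · rw [h]
    · exact (ih (by omega) (by omega)).trans (hstep n (by omega))

end TCAux
namespace TCAux

lemma seqC_incr (ρ c : ℝ) (hρ : 0 < ρ) (K : ℕ) (hnn : ∀ j ≤ K, 0 ≤ seqC ρ c j)
    (h01 : seqC ρ c 0 ≤ seqC ρ c 1) : ∀ n, n < K → seqC ρ c n ≤ seqC ρ c (n+1) := by
  intro n
  induction n with
  | zero => exact fun _ => h01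
  | succ n ih =>
    intro hlt
    have h1 := ih (by omega)
    have h0 : 0 ≤ seqC ρ c n := hnn n (by omega)
    have h2 : (seqC ρ c n)^2 ≤ (seqC ρ c (n+1))^2 := by nlinarith
    have key := mul_le_mul_of_nonneg_left (sub_le_sub_right h2 c) hρ.le
    rw [← seqC_succ, ← seqC_succ] at key
    exact key

lemma seqC_decr (ρ c : ℝ) (hρ : 0 < ρ) (K : ℕ) (hnn : ∀ j ≤ K, 0 ≤ seqC ρ c j)
    (h01 : seqC ρ c 1 ≤ seqC ρ c 0) : ∀ n, n < K → seqC ρ c (n+1) ≤ seqC ρ c n := by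
  intro n
  induction n with
  | zero => exact fun _ => h01
  | succ n ih =>
    intro hlt
    have h1 := ih (by omega)
    have h0 : 0 ≤ seqC ρ c (n+1) := hnn (n+1) (by omega)
    have h2 : (seqC ρ c (n+1))^2 ≤ (seqC ρ c n)^2 := by nlinarith
    have key := mul_le_mul_of_nonneg_left (sub_le_sub_right h2 c) hρ.le
    rw [← seqC_succ, ← seqC_succ] at key
    exact key

theorem exists_profile (ρ : ℝ) (hρ : 0 < ρ) (K : ℕ) (hK : 2 ≤ K) :
    ∃ v : Fin (K+1) → ℝ, IsTwoChoiceProfile ρ K v := by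
  classical
  set S : Set ℝ := {c | c ∈ Set.Icc (0:ℝ) 1 ∧ ∀ k ≤ K, 0 ≤ seqC ρ c k} with hSdef
  have hS0 : (0:ℝ) ∈ S := ⟨⟨le_refl 0, zero_le_one⟩, fun k _ => (seqC_pos ρ hρ k).le⟩
  have hSne : S.Nonempty := ⟨0, hS0⟩
  have hSbdd : BddAbove S := ⟨1, fun c hc => hc.1.2⟩
  have hSclosed : IsClosed S := by
    have hrw : S = Set.Icc (0:ℝ) 1 ∩ ⋂ k ∈ Set.Iic K, (fun c => seqC ρ c k) ⁻¹' Set.Ici 0 := by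
      ext c
      simp [hSdef, Set.mem_iInter, Set.mem_Iic]
    rw [hrw]
    exact isClosed_Icc.inter (isClosed_biInter fun k _ =>
      (isClosed_Ici.preimage (continuous_seqC ρ k)))
  set c₁ := sSup S with hc₁def
  have hc₁S : c₁ ∈ S := hSclosed.csSup_mem hSne hSbdd
  have hc₁0 : 0 ≤ c₁ := hc₁S.1.1
  have hc₁1 : c₁ ≤ 1 := hc₁S.1.2
  have hc₁lt1 : c₁ < 1 := by
    rcases lt_or_eq_of_le hc₁1 with h | h
    · exact h
    exfalso
    have h2 : 0 ≤ seqC ρ c₁ 2 := hc₁S.2 2 hK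
    rw [h] at h2
    have h3 : seqC ρ 1 2 = -ρ := by
      norm_num [seqC_succ, seqC_zero]
    rw [h3] at h2
    linarith
  have hcle : (seqC ρ c₁ K)^2 ≤ c₁ := by
    by_contra hgt
    push_neg at hgt
    have hpos : ∀ k ≤ K, 0 < seqC ρ c₁ k := by
      intro k hk
      rcases (hc₁S.2 k hk).lt_or_eq with h | h
      · exact h
      exfalso
      rcases Nat.eq_or_lt_of_le hk with hkK | hkK
      · rw [hkK] at h
        rw [← h] at hgt
        nlinarith
      · have hnext : 0 ≤ seqC ρ c₁ (k+1) := hc₁S.2 (k+1) hkK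
        rw [seqC_succ, ← h] at hnext
        have hc10 : c₁ ≤ 0 := by nlinarith
        have hc1z : c₁ = 0 := le_antisymm hc10 hc₁0
        rw [hc1z] at h
        exact absurd h.symm (ne_of_gt (seqC_pos ρ hρ k))
    have hev : ∀ᶠ c in nhds c₁, (∀ k ∈ Finset.range (K+1), 0 < seqC ρ c k) ∧ c < 1 := by
      have h1 : ∀ᶠ c in nhds c₁, c < 1 :=
        (isOpen_Iio.eventually_mem (show c₁ ∈ Set.Iio 1 from hc₁lt1))
      have h2 : ∀ᶠ c in nhds c₁, ∀ k ∈ Finset.range (K+1), 0 < seqC ρ c k := by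
        rw [Filter.eventually_all_finset]
        intro k hk
        have := (continuous_seqC ρ k).continuousAt (x := c₁)
        have hmem : Set.Ioi (0:ℝ) ∈ nhds (seqC ρ c₁ k) :=
          isOpen_Ioi.mem_nhds (hpos k (by simpa using Nat.lt_succ_iff.mp (Finset.mem_range.mp hk)))
        exact this.eventually_mem hmem
      exact h2.and h1
    have hev' : ∀ᶠ c in nhdsWithin c₁ (Set.Ioi c₁),
        c ∈ Set.Ioi c₁ ∧ ((∀ k ∈ Finset.range (K+1), 0 < seqC ρ c k) ∧ c < 1) :=
      eventually_mem_nhdsWithin.and (hev.filter_mono nhdsWithin_le_nhds)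
    obtain ⟨c, hc⟩ := hev'.exists
    have hcS : c ∈ S := by
      refine ⟨⟨hc₁0.trans (le_of_lt hc.1), hc.2.2.le⟩, fun k hk => ?_⟩
      exact (hc.2.1 k (Finset.mem_range.mpr (by omega))).le
    have := le_csSup hSbdd hcS
    have hgt' : c₁ < c := hc.1
    linarith
  obtain ⟨c₀, hc₀mem, hc₀⟩ : ∃ c₀ ∈ Set.Icc (0:ℝ) c₁, (seqC ρ c₀ K)^2 - c₀ = 0 := by
    have hcont : ContinuousOn (fun c => (seqC ρ c K)^2 - c) (Set.Icc 0 c₁) :=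
      (((continuous_seqC ρ K).pow 2).sub continuous_id).continuousOn
    have hsub := intermediate_value_Icc' hc₁0 hcont
    have h0mem : (0:ℝ) ∈ Set.Icc ((seqC ρ c₁ K)^2 - c₁) ((seqC ρ 0 K)^2 - 0) := by
      constructor
      · linarith
      · have := seqC_pos ρ hρ K
        nlinarith
    obtain ⟨c₀, hmem, heq⟩ := hsub h0mem
    exact ⟨c₀, hmem, heq⟩
  have hc₀sq : (seqC ρ c₀ K)^2 = c₀ := by linarith
  have hc₀0 : 0 ≤ c₀ := hc₀mem.1
  have hc₀c₁ : c₀ ≤ c₁ := hc₀mem.2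
  have hc₀1 : c₀ ≤ 1 := hc₀c₁.trans hc₁1
  have hnn : ∀ k ≤ K, 0 ≤ seqC ρ c₀ k := by
    intro k hk
    have h1 : seqC ρ c₁ k ≤ seqC ρ c₀ k :=
      seqC_anti ρ hρ hc₀c₁ k (fun j hj => hc₁S.2 j (le_of_lt (hj.trans_le hk)))
    exact (hc₁S.2 k hk).trans h1
  have hv1 : seqC ρ c₀ 1 ≤ 1 := by
    by_contra h
    push_neg at h
    have h01 : seqC ρ c₀ 0 ≤ seqC ρ c₀ 1 := by rw [seqC_zero]; exact h.le
    have hinc := seqC_incr ρ c₀ hρ K hnn h01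
    have h1K : seqC ρ c₀ 1 ≤ seqC ρ c₀ K :=
      chain_ge' (seqC ρ c₀) K hinc 1 K (by omega) le_rfl
    have : (1:ℝ) < c₀ := by nlinarith
    linarith
  have hdecstep := seqC_decr ρ c₀ hρ K hnn (by rw [seqC_zero]; exact hv1)
  -- build profile
  refine ⟨fun k => seqC ρ c₀ (k : ℕ), ?_, ?_, ?_, ?_⟩
  · show extProfile K _ 0 = 1
    simp [extProfile, seqC_zero]
  · 
    intro k hk
    have hk1 : k + 1 < K + 1 := by omega
    have hk2 : k < K + 1 := by omega
    show extProfile K _ (k+1) ≤ extProfile K _ k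
    simp only [extProfile, dif_pos hk1, dif_pos hk2]
    exact hdecstep k hk
  · show (0:ℝ) ≤ extProfile K _ K
    simp only [extProfile, dif_pos (Nat.lt_succ_self K)]
    exact hnn K le_rfl
  · intro k h1 hkK
    have hsk : seqC ρ c₀ k = ρ * ((seqC ρ c₀ (k-1))^2 - c₀) := by
      conv_lhs => rw [show k = (k-1)+1 by omega]
      rw [seqC_succ]
    have hklt : k < K + 1 := by omega
    have hk1lt : k - 1 < K + 1 := by omega
    rcases Nat.eq_or_lt_of_le hkK with hkK' | hkK'
    · -- k = K
      subst hkK'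
      have hKK : ¬ (k + 1 < k + 1) := by omega
      simp only [extProfile, dif_pos hklt, dif_pos hk1lt, dif_neg hKK]
      linear_combination hsk + ρ * hc₀sq
    · have hk1lt' : k + 1 < K + 1 := by omega
      have hsk1 : seqC ρ c₀ (k+1) = ρ * ((seqC ρ c₀ k)^2 - c₀) := seqC_succ ρ c₀ k
      simp only [extProfile, dif_pos hklt, dif_pos hk1lt, dif_pos hk1lt']
      rw [hsk1, hsk]
      ring

end TCAux
namespace TCAux

section Analysis

variable {K : ℕ} {ρ : ℝ} {V : ℕ → ℝ}

lemma tel (hK1 : 1 ≤ K)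
    (hrel : ∀ k, 1 ≤ k → k ≤ K → V k - V (k+1) = ρ*((V (k-1))^2 - (V k)^2))
    (htop : V (K+1) = 0) :
    ∀ k, 1 ≤ k → k ≤ K → V k = ρ*((V (k-1))^2 - (V K)^2) := by
  have main : ∀ j, j ≤ K - 1 → V (K - j) = ρ*((V (K - j - 1))^2 - (V K)^2) := by
    intro j
    induction j with
    | zero =>
      intro _
      have h := hrel K hK1 le_rfl
      rw [htop] at h
      simpa using h
    | succ j ih =>
      intro hj
      have ihj := ih (by omega)
      have hk1 : 1 ≤ K - (j+1) := by omega
      have h := hrel (K - (j+1)) hk1 (by omega)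
      have e1 : K - (j+1) + 1 = K - j := by omega
      have e2 : K - j - 1 = K - (j+1) := by omega
      rw [e1] at h
      rw [e2] at ihj
      linear_combination h + ihj
  intro k h1 hk
  have e1 : K - (K - k) = k := by omega
  have e2 : K - (K - k) - 1 = k - 1 := by omega
  have h := main (K - k) (by omega)
  rw [e1] at h
  exact h

lemma anti (hdec : ∀ k < K, V (k+1) ≤ V k) :
    ∀ m n, m ≤ n → n ≤ K → V n ≤ V m :=
  chain_ge V K hdec

lemma nonneg (hK0 : 0 ≤ V K) (hdec : ∀ k < K, V (k+1) ≤ V k) :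
    ∀ k ≤ K, 0 ≤ V k :=
  fun k hk => hK0.trans (anti hdec k K hk le_rfl)

lemma le_one (h0 : V 0 = 1) (hdec : ∀ k < K, V (k+1) ≤ V k) :
    ∀ k ≤ K, V k ≤ 1 :=
  fun k hk => h0 ▸ anti hdec 0 k (Nat.zero_le k) hk

lemma chainSq (hρ : 0 < ρ) (h0 : V 0 = 1) (hK0 : 0 ≤ V K)
    (hdec : ∀ k < K, V (k+1) ≤ V k) (hK1 : 1 ≤ K)
    (htel : ∀ k, 1 ≤ k → k ≤ K → V k = ρ*((V (k-1))^2 - (V K)^2)) :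
    ∀ k, 1 ≤ k → k ≤ K → V k ≤ (V (k-1))^2 := by
  have hw0 : 0 ≤ (V K)^2 := sq_nonneg _
  have hone : ρ * (1 - (V K)^2) ≤ 1 := by
    have h1 : V 1 = ρ * ((V 0)^2 - (V K)^2) := htel 1 le_rfl hK1
    rw [h0] at h1
    have := le_one h0 hdec 1 hK1
    nlinarith [this, h1]
  intro k h1 hk
  rw [htel k h1 hk]
  have hx0 : 0 ≤ V (k-1) := nonneg hK0 hdec (k-1) (by omega)
  have hx1 : V (k-1) ≤ 1 := le_one h0 hdec (k-1) (by omega)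
  nlinarith [mul_nonneg (mul_nonneg hρ.le hw0) (sub_nonneg.2 (show (V (k-1))^2 ≤ 1 by nlinarith)),
    mul_nonneg (sq_nonneg (V (k-1))) (sub_nonneg.2 hone)]

lemma vpow (hρ : 0 < ρ) (h0 : V 0 = 1) (hK0 : 0 ≤ V K)
    (hdec : ∀ k < K, V (k+1) ≤ V k)
    (htel : ∀ k, 1 ≤ k → k ≤ K → V k = ρ*((V (k-1))^2 - (V K)^2)) :
    ∀ k ≤ K, V k ≤ ρ^(2^k - 1) := by
  intro k
  induction k with
  | zero => intro _; simp [h0]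
  | succ k ih =>
    intro hk
    have ihk := ih (by omega)
    have hx0 : 0 ≤ V k := nonneg hK0 hdec k (by omega)
    have h := htel (k+1) (by omega) hk
    simp only [Nat.add_sub_cancel] at h
    have h2 : V (k+1) ≤ ρ * (V k)^2 := by nlinarith [sq_nonneg (V K)]
    have h3 : (V k)^2 ≤ (ρ^(2^k - 1))^2 := by
      apply pow_le_pow_left₀ hx0 ihk
    have h4 : ρ * (V k)^2 ≤ ρ * (ρ^(2^k - 1))^2 := by
      exact mul_le_mul_of_nonneg_left h3 hρ.le
    have h5 : ρ * (ρ^(2^k - 1))^2 = ρ^(2^(k+1) - 1) := by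
      rw [← pow_mul, ← pow_succ']
      congr 1
      have : 1 ≤ 2^k := Nat.one_le_two_pow
      omega
    linarith [h2, h4, h5.le]

lemma v1chain (hρ : 0 < ρ) (h0 : V 0 = 1) (hK0 : 0 ≤ V K)
    (hdec : ∀ k < K, V (k+1) ≤ V k) (hK1 : 1 ≤ K)
    (htel : ∀ k, 1 ≤ k → k ≤ K → V k = ρ*((V (k-1))^2 - (V K)^2)) :
    ∀ k, 1 ≤ k → k ≤ K → V k ≤ (V 1)^(2^(k-1)) := by
  intro k
  induction k with
  | zero => omega
  | succ k ih =>
    intro _ hk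
    rcases Nat.eq_or_lt_of_le (show 1 ≤ k + 1 by omega) with h1 | h1
    · rw [← h1]
      simp
    · have hk1 : 1 ≤ k := by omega
      have ihk := ih hk1 (by omega)
      have hx0 : 0 ≤ V k := nonneg hK0 hdec k (by omega)
      have h10 : 0 ≤ V 1 := nonneg hK0 hdec 1 hK1
      have h2 : V (k+1) ≤ (V k)^2 := by
        have := chainSq hρ h0 hK0 hdec hK1 htel (k+1) (by omega) hk
        simpa using this
      have h3 : (V k)^2 ≤ ((V 1)^(2^(k-1)))^2 := pow_le_pow_left₀ hx0 ihk 2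
      have h4 : ((V 1)^(2^(k-1)))^2 = (V 1)^(2^(k+1-1)) := by
        rw [← pow_mul]
        congr 1
        have : 1 ≤ 2^(k-1) := Nat.one_le_two_pow
        have e : k + 1 - 1 = k := by omega
        rw [e]
        conv_rhs => rw [show k = (k-1)+1 by omega]
        rw [pow_succ]
      calc V (k+1) ≤ (V k)^2 := h2
        _ ≤ ((V 1)^(2^(k-1)))^2 := h3
        _ = (V 1)^(2^(k+1-1)) := h4


lemma eband (hρ : 0 < ρ) (h0 : V 0 = 1) (hK0 : 0 ≤ V K)
    (hdec : ∀ k < K, V (k+1) ≤ V k) (hρ1 : 1 ≤ ρ)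
    (htel : ∀ k, 1 ≤ k → k ≤ K → V k = ρ*((V (k-1))^2 - (V K)^2)) :
    ∀ k ≤ K, 1 - V k ≤ ((2:ℝ)^k - 1) * (V K)^2 := by
  intro k
  induction k with
  | zero => intro _; simp [h0]
  | succ k ih =>
    intro hk
    have ihk := ih (by omega)
    have hx0 : 0 ≤ V k := nonneg hK0 hdec k (by omega)
    have hx1 : V k ≤ 1 := le_one h0 hdec k (by omega)
    have h := htel (k+1) (by omega) hk
    simp only [Nat.add_sub_cancel] at h
    have hXnn : 0 ≤ (V k)^2 - (V K)^2 := by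
      by_contra hc
      push_neg at hc
      have : V (k+1) < 0 := by nlinarith
      exact absurd this (not_lt.2 (nonneg hK0 hdec (k+1) hk))
    have hge : (V k)^2 - (V K)^2 ≤ V (k+1) := by nlinarith
    have hps : (2:ℝ)^(k+1) = 2 * 2^k := by ring
    nlinarith [sq_nonneg (1 - V k), sq_nonneg (V K)]

end Analysis
end TCAux
namespace TCAux

section Analysis2

variable {K : ℕ} {ρ : ℝ} {V : ℕ → ℝ}

lemma rho_one (h0 : V 0 = 1) (hdec : ∀ k < K, V (k+1) ≤ V k) (hK1 : 1 ≤ K)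
    (htel : ∀ k, 1 ≤ k → k ≤ K → V k = ρ*((V (k-1))^2 - (V K)^2)) :
    ρ * (1 - (V K)^2) ≤ 1 := by
  have h1 : V 1 = ρ * ((V 0)^2 - (V K)^2) := htel 1 le_rfl hK1
  rw [h0] at h1
  have := le_one h0 hdec 1 hK1
  nlinarith [this, h1]

lemma backSqrt (hρ : 0 < ρ) (h0 : V 0 = 1) (hK0 : 0 ≤ V K)
    (hdec : ∀ k < K, V (k+1) ≤ V k) (hK1 : 1 ≤ K)
    (htel : ∀ k, 1 ≤ k → k ≤ K → V k = ρ*((V (k-1))^2 - (V K)^2))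
    (ht : 0 < V K) :
    ∀ j ≤ K, (V K) ^ ((1:ℝ)/2^j) * (1 - (V K)^2) ≤ V (K - j) := by
  have hone := rho_one h0 hdec hK1 htel
  have ht1 : V K ≤ 1 := le_one h0 hdec K le_rfl
  have hw0 : 0 ≤ (V K)^2 := sq_nonneg _
  have hw1 : (V K)^2 ≤ 1 := by nlinarith
  intro j
  induction j with
  | zero =>
    intro _
    have : (V K) ^ ((1:ℝ)/2^0) = V K := by
      norm_num
    rw [Nat.sub_zero, this]
    nlinarith
  | succ j ih =>
    intro hj
    have ihj := ih (by omega)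
    set t := V K with htdef
    set w := (V K)^2 with hwdef
    set k := K - j with hkdef
    have hk1 : 1 ≤ k := by omega
    have hkK : k ≤ K := by omega
    have h := htel k hk1 hkK
    have hVk0 : 0 ≤ V k := nonneg hK0 hdec k hkK
    have key : 0 ≤ V k * (1 - ρ*(1-w)) := mul_nonneg hVk0 (by linarith)
    have hgoal : ρ * ((V (k-1))^2 - (V k * (1-w) + w)) = V k * (1 - ρ*(1-w)) := by
      linear_combination -h
    have claim1 : V k * (1-w) + w ≤ (V (k-1))^2 := by nlinarith [hgoal, key, hρ]
    -- IH lower bound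
    have hBj : t ^ ((1:ℝ)/2^j) * (1-w) ≤ V k := ihj
    have hBnn : 0 ≤ t ^ ((1:ℝ)/2^j) := Real.rpow_nonneg ht.le _
    have h1w : 0 ≤ 1 - w := by linarith
    have step1 : t ^ ((1:ℝ)/2^j) * (1-w) * (1-w) + w ≤ (V (k-1))^2 := by
      have := mul_le_mul_of_nonneg_right hBj h1w
      linarith
    have hsq : (t ^ ((1:ℝ)/2^(j+1)) * (1-w))^2 = t ^ ((1:ℝ)/2^j) * (1-w) * (1-w) := by
      rw [mul_pow]
      have e1 : (t ^ ((1:ℝ)/2^(j+1)))^2 = t ^ ((1:ℝ)/2^j) := by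
        rw [← Real.rpow_natCast (t ^ ((1:ℝ)/2^(j+1))) 2, ← Real.rpow_mul ht.le]
        congr 1
        rw [pow_succ]
        push_cast
        field_simp
      rw [e1]
      ring
    have hle : (t ^ ((1:ℝ)/2^(j+1)) * (1-w))^2 ≤ (V (k-1))^2 := by
      rw [hsq]
      nlinarith [step1, hw0]
    have hres : t ^ ((1:ℝ)/2^(j+1)) * (1-w) ≤ V (k-1) :=
      le_of_sq_le_sq hle (nonneg hK0 hdec (k-1) (by omega))
    have ekk : K - (j+1) = k - 1 := by omega
    rw [ekk]
    exact hres

lemma backStep (hρ : 0 < ρ) (h0 : V 0 = 1) (hK0 : 0 ≤ V K)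
    (hdec : ∀ k < K, V (k+1) ≤ V k) (hK1 : 1 ≤ K)
    (htel : ∀ k, 1 ≤ k → k ≤ K → V k = ρ*((V (k-1))^2 - (V K)^2))
    (hw1 : (V K)^2 < 1) :
    ∀ k, 1 ≤ k → k ≤ K → 0 < V k →
      0 < V (k-1) ∧ 2*(1 - V (k-1))*(V k) ≤ (1 - V k)*(V (k-1)) := by
  have hone := rho_one h0 hdec hK1 htel
  have hw0 : 0 ≤ (V K)^2 := sq_nonneg _
  intro k hk1 hkK hx
  set x := V k with hxdef
  set w := (V K)^2 with hwdef
  set x' := V (k-1) with hx'def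
  have hx1 : x ≤ 1 := le_one h0 hdec k hkK
  have hx'0 : 0 ≤ x' := nonneg hK0 hdec (k-1) (by omega)
  have h := htel k hk1 hkK
  have key : 0 ≤ x * (1 - ρ*(1-w)) := mul_nonneg hx.le (by linarith)
  have hgoal : ρ * (x'^2 - (x * (1-w) + w)) = x * (1 - ρ*(1-w)) := by
    linear_combination -h
  have claim1 : x * (1-w) + w ≤ x'^2 := by nlinarith [hgoal, key, hρ]
  set g := Real.sqrt (x*(1-w) + w) with hgdef
  have harg0 : 0 < x*(1-w) + w := by nlinarith
  have hg2 : g^2 = x*(1-w) + w := Real.sq_sqrt harg0.le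
  have hgpos : 0 < g := Real.sqrt_pos.2 harg0
  have hx'g : g ≤ x' := le_of_sq_le_sq (by rw [hg2]; exact claim1) hx'0
  have hgle1 : g ≤ 1 := le_of_sq_le_sq (by rw [hg2]; nlinarith) zero_le_one
  have hx'pos : 0 < x' := lt_of_lt_of_le hgpos hx'g
  refine ⟨hx'pos, ?_⟩
  -- key2 : 2*x*(1-w) ≤ g*(1+g)
  have key2 : 2*x*(1-w) ≤ g*(1+g) := by nlinarith [hg2, mul_nonneg hgpos.le (sub_nonneg.2 hgle1)]
  -- key1 : (1-g)*(1+g) = (1-x)*(1-w)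
  have key1 : (1-g)*(1+g) = (1-x)*(1-w) := by linear_combination -hg2
  -- key3 : 2*(1-g)*x ≤ (1-x)*g
  have key3 : 2*(1-g)*x ≤ (1-x)*g := by
    have h5 : 2*(1-g)*x*(1+g) = 2*x*((1-x)*(1-w)) := by linear_combination 2*x*key1
    have h6 : 2*x*((1-x)*(1-w)) ≤ (1-x)*(g*(1+g)) := by
      have := mul_le_mul_of_nonneg_left key2 (sub_nonneg.2 hx1)
      linarith [this]
    have h7 : 2*(1-g)*x*(1+g) ≤ ((1-x)*g)*(1+g) := by
      rw [h5]
      calc 2*x*((1-x)*(1-w)) ≤ (1-x)*(g*(1+g)) := h6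
        _ = ((1-x)*g)*(1+g) := by ring
    exact le_of_mul_le_mul_right h7 (by linarith)
  calc 2*(1 - x')*x ≤ 2*(1-g)*x := by nlinarith [hx'g, hx.le]
    _ ≤ (1-x)*g := key3
    _ ≤ (1-x)*x' := mul_le_mul_of_nonneg_left hx'g (by linarith)

end Analysis2
end TCAux
namespace TCAux

lemma Icc1_eq (n : ℕ) : Finset.Icc 1 n = Finset.Ioc 0 n := by
  ext x
  simp [Finset.mem_Icc, Finset.mem_Ioc]
  omega

section Analysis3

variable {K : ℕ} {ρ : ℝ} {V : ℕ → ℝ}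

lemma tail_sum (hρ : 0 < ρ) (h0 : V 0 = 1) (hK0 : 0 ≤ V K)
    (hdec : ∀ k < K, V (k+1) ≤ V k) (hK1 : 1 ≤ K)
    (htel : ∀ k, 1 ≤ k → k ≤ K → V k = ρ*((V (k-1))^2 - (V K)^2))
    (hw1 : (V K)^2 < 1)
    {j₀ : ℕ} (hj₀ : j₀ ≤ K - 1) {Y : ℝ} (hY0 : 0 ≤ Y)
    (hx₀ : 0 < V (K - j₀)) (hYx : 1 - V (K - j₀) ≤ Y * V (K - j₀)) :
    ∑ k ∈ Finset.Icc 1 K, (1 - V k) ≤ j₀ + 2*Y := by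
  set M := K - j₀ with hM
  have hM1 : 1 ≤ M := by omega
  have hMK : M ≤ K := by omega
  have claimC : ∀ i ≤ M - 1, 0 < V (M - i) ∧ (1 - V (M - i)) * 2^i ≤ Y * V (M - i) := by
    intro i
    induction i with
    | zero =>
      intro _
      refine ⟨by simpa using hx₀, ?_⟩
      simpa using hYx
    | succ i ih =>
      intro hi
      obtain ⟨hp, hb⟩ := ih (by omega)
      have hk1 : 1 ≤ M - i := by omega
      obtain ⟨hp', hstep⟩ := backStep hρ h0 hK0 hdec hK1 htel hw1 (M - i) hk1 (by omega) hp
      have e : M - (i+1) = M - i - 1 := by omega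
      rw [e]
      refine ⟨hp', ?_⟩
      have h1 : (1 - V (M-i-1))*2^(i+1)*(V (M-i)) = (2*(1-V (M-i-1))*(V (M-i)))*2^i := by ring
      have h2 : (2*(1-V (M-i-1))*(V (M-i)))*2^i ≤ ((1-V (M-i))*(V (M-i-1)))*2^i :=
        mul_le_mul_of_nonneg_right hstep (by positivity)
      have h4 : ((1-V (M-i))*2^i)*(V (M-i-1)) ≤ (Y*(V (M-i)))*(V (M-i-1)) :=
        mul_le_mul_of_nonneg_right hb hp'.le
      have hfin : (1 - V (M-i-1))*2^(i+1)*(V (M-i)) ≤ (Y*(V (M-i-1)))*(V (M-i)) := by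
        rw [h1]
        calc (2*(1-V (M-i-1))*(V (M-i)))*2^i ≤ ((1-V (M-i))*(V (M-i-1)))*2^i := h2
          _ = ((1-V (M-i))*2^i)*(V (M-i-1)) := by ring
          _ ≤ (Y*(V (M-i)))*(V (M-i-1)) := h4
          _ = (Y*(V (M-i-1)))*(V (M-i)) := by ring
      exact le_of_mul_le_mul_right hfin hp
  have hperk : ∀ k ∈ Finset.Icc 1 M, 1 - V k ≤ Y * ((2:ℝ)^k / 2^M) := by
    intro k hk
    obtain ⟨hk1, hkM⟩ := Finset.mem_Icc.mp hk
    obtain ⟨hp, hb⟩ := claimC (M-k) (by omega)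
    have e : M - (M-k) = k := by omega
    rw [e] at hp hb
    have hVk1 : V k ≤ 1 := le_one h0 hdec k (by omega)
    have h2 : (1 - V k) * 2^(M-k) ≤ Y := by
      calc (1-V k)*2^(M-k) ≤ Y * V k := hb
        _ ≤ Y * 1 := mul_le_mul_of_nonneg_left hVk1 hY0
        _ = Y := mul_one Y
    have h3 : 1 - V k ≤ Y / 2^(M-k) := (le_div_iff₀ (by positivity)).mpr h2
    have hpow : (2:ℝ)^(M-k) = 2^M / 2^k := by
      rw [pow_sub₀ (2:ℝ) two_ne_zero hkM]
      rw [div_eq_mul_inv]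
    rw [hpow] at h3
    have heq2 : Y / ((2:ℝ)^M/2^k) = Y * ((2:ℝ)^k/2^M) := by
      rw [div_div_eq_mul_div]
      ring
    rw [heq2] at h3
    exact h3
  have hsplit : ∑ k ∈ Finset.Icc 1 K, (1 - V k)
      = ∑ k ∈ Finset.Icc 1 M, (1 - V k) + ∑ k ∈ Finset.Ioc M K, (1 - V k) := by
    rw [Icc1_eq K, Icc1_eq M]
    exact (Finset.sum_Ioc_consecutive _ (Nat.zero_le M) hMK).symm
  have h2sum : ∑ k ∈ Finset.Ioc M K, (1 - V k) ≤ (j₀:ℝ) := by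
    have hb := Finset.sum_le_card_nsmul (Finset.Ioc M K) (fun k => 1 - V k) 1 (by
      intro x hx
      have hxK : x ≤ K := (Finset.mem_Ioc.mp hx).2
      have := nonneg hK0 hdec x hxK
      linarith)
    have hcard : (Finset.Ioc M K).card = j₀ := by rw [Nat.card_Ioc]; omega
    rw [hcard] at hb
    simpa using hb
  have hgeom : ∑ k ∈ Finset.Icc 1 M, (2:ℝ)^k ≤ 2^(M+1) := by
    have hg := geom_sum_Ico (x:=(2:ℝ)) (by norm_num) (show 1 ≤ M+1 by omega)
    rw [Finset.Ico_add_one_right_eq_Icc] at hg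
    rw [hg]
    norm_num
  have h1sum : ∑ k ∈ Finset.Icc 1 M, (1 - V k) ≤ 2*Y := by
    calc ∑ k ∈ Finset.Icc 1 M, (1 - V k)
        ≤ ∑ k ∈ Finset.Icc 1 M, Y * ((2:ℝ)^k/2^M) := Finset.sum_le_sum hperk
      _ = (Y/2^M) * ∑ k ∈ Finset.Icc 1 M, (2:ℝ)^k := by
          rw [Finset.mul_sum]
          apply Finset.sum_congr rfl
          intro x _
          ring
      _ ≤ (Y/2^M) * 2^(M+1) := mul_le_mul_of_nonneg_left hgeom (by positivity)
      _ = 2*Y := by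
          rw [pow_succ]
          field_simp
  rw [hsplit]
  linarith

end Analysis3
end TCAux
namespace TCAux

section Analysis4

variable {K : ℕ} {ρ : ℝ} {V : ℕ → ℝ}

lemma geom_le (M : ℕ) : ∑ k ∈ Finset.Icc 1 M, (2:ℝ)^k ≤ 2^(M+1) := by
  have hg := geom_sum_Ico (x:=(2:ℝ)) (by norm_num) (show 1 ≤ M+1 by omega)
  rw [Finset.Ico_add_one_right_eq_Icc] at hg
  rw [hg]
  norm_num

set_option maxHeartbeats 1000000 in
lemma sum_e_le (hρ : 0 < ρ) (h0 : V 0 = 1) (hK0 : 0 ≤ V K)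
    (hdec : ∀ k < K, V (k+1) ≤ V k)
    (htel : ∀ k, 1 ≤ k → k ≤ K → V k = ρ*((V (k-1))^2 - (V K)^2))
    (hρ1 : 1 ≤ ρ) (hK14 : 14 ≤ K)
    (hKbig : 8*(K:ℝ) ≤ (2:ℝ)^((K:ℝ)/2)) :
    ∑ k ∈ Finset.Icc 1 K, (1 - V k) ≤ Real.logb 2 K + 3 := by
  have hK1 : 1 ≤ K := by omega
  set δ : ℝ := (2:ℝ)^(-(K:ℝ)/2) with hδdef
  have hδpos : 0 < δ := Real.rpow_pos_of_pos (by norm_num) _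
  have hδ2 : δ^2 = (2:ℝ)^(-(K:ℝ)) := by
    rw [sq, hδdef, ← Real.rpow_add (by norm_num : (0:ℝ) < 2)]
    congr 1
    ring
  have hlogK0 : 0 ≤ Real.logb 2 K := Real.logb_nonneg (by norm_num) (by exact_mod_cast hK1)
  have hlogK : Real.logb 2 (K:ℝ) ≤ (K:ℝ)/2 - 3 := by
    have hKpos : (0:ℝ) < K := by exact_mod_cast hK1
    have h1 : Real.logb 2 (8*(K:ℝ)) ≤ Real.logb 2 ((2:ℝ)^((K:ℝ)/2)) :=
      (Real.logb_le_logb (by norm_num) (by positivity) (by positivity)).mpr hKbig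
    rw [Real.logb_rpow (by norm_num : (0:ℝ) < 2) (by norm_num)] at h1
    rw [Real.logb_mul (by norm_num) (ne_of_gt hKpos)] at h1
    have h8 : Real.logb 2 8 = 3 := by
      rw [show (8:ℝ) = 2^(3:ℕ) by norm_num, Real.logb_pow]
      simp [Real.logb_self_eq_one]
    rw [h8] at h1
    linarith
  set t := V K with htdef
  have ht1 : t ≤ 1 := le_one h0 hdec K le_rfl
  rcases le_or_gt t δ with hA | hB
  · -- t small: forward bound
    have hsum : ∀ k ∈ Finset.Icc 1 K, 1 - V k ≤ (2:ℝ)^k * δ^2 := by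
      intro k hk
      obtain ⟨hk1, hkK⟩ := Finset.mem_Icc.mp hk
      have hb := eband hρ h0 hK0 hdec hρ1 htel k hkK
      have hw : t^2 ≤ δ^2 := by nlinarith
      have hp1 : (1:ℝ) ≤ (2:ℝ)^k := one_le_pow₀ (by norm_num : (1:ℝ) ≤ 2)
      nlinarith [pow_nonneg (show (0:ℝ) ≤ 2 by norm_num) k, sq_nonneg t]
    calc ∑ k ∈ Finset.Icc 1 K, (1 - V k) ≤ ∑ k ∈ Finset.Icc 1 K, (2:ℝ)^k * δ^2 :=
          Finset.sum_le_sum hsum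
      _ = δ^2 * ∑ k ∈ Finset.Icc 1 K, (2:ℝ)^k := by rw [Finset.mul_sum]; apply Finset.sum_congr rfl; intro x _; ring
      _ ≤ δ^2 * 2^(K+1) := mul_le_mul_of_nonneg_left (geom_le K) (by positivity)
      _ = 2 := by
          rw [hδ2, ← Real.rpow_natCast (2:ℝ) (K+1), ← Real.rpow_add (by norm_num : (0:ℝ) < 2)]
          rw [show -(K:ℝ) + ((K+1:ℕ):ℝ) = 1 by push_cast; ring]
          exact Real.rpow_one 2
      _ ≤ Real.logb 2 K + 3 := by linarith
  · -- t > δ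
    have ht0 : 0 < t := lt_trans hδpos hB
    rcases eq_or_lt_of_le ht1 with hteq1 | htlt1
    · -- t = 1
      have : ∀ k ∈ Finset.Icc 1 K, 1 - V k ≤ 0 := by
        intro k hk
        obtain ⟨hk1, hkK⟩ := Finset.mem_Icc.mp hk
        have := anti hdec k K hkK le_rfl
        rw [← htdef] at this
        linarith [hteq1 ▸ this]
      have := Finset.sum_nonpos this
      linarith
    · have hw1 : t^2 < 1 := by nlinarith
      rcases le_or_gt (1/2 : ℝ) t with hhalf | hhalf
      · -- t ≥ 1/2 : tail with j₀ = 0, Y = 1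
        have htail := tail_sum hρ h0 hK0 hdec hK1 htel hw1 (j₀ := 0)
          (by omega) (Y := 1) zero_le_one
          (by simpa using ht0)
          (by simp only [Nat.sub_zero]; rw [← htdef]; linarith)
        have : ((0:ℕ):ℝ) + 2*1 = 2 := by norm_num
        rw [this] at htail
        linarith
      · -- δ < t < 1/2
        set L : ℝ := -Real.logb 2 t with hLdef
        have hlogt : Real.logb 2 t < -1 := by
          have h1 : Real.logb 2 t < Real.logb 2 (1/2) := Real.logb_lt_logb (by norm_num) ht0 hhalf
          have h2 : Real.logb 2 (1/2:ℝ) = -1 := by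
            rw [show (1/2:ℝ) = 2^(-1:ℝ) by rw [Real.rpow_neg_one]; norm_num]
            exact Real.logb_rpow (by norm_num) (by norm_num)
          linarith [h2 ▸ h1]
        have hL1 : 1 < L := by simp only [hLdef]; linarith
        have hLK : L < (K:ℝ)/2 := by
          have h1 : Real.logb 2 δ < Real.logb 2 t := Real.logb_lt_logb (by norm_num) hδpos hB
          rw [hδdef, Real.logb_rpow (by norm_num : (0:ℝ) < 2) (by norm_num)] at h1
          simp only [hLdef]
          linarith
        set j₀ : ℕ := ⌈Real.logb 2 (2*L)⌉₊ with hj₀def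
        have h2L : (2:ℝ) < 2*L := by linarith
        have hlogpos : 0 < Real.logb 2 (2*L) := Real.logb_pos (by norm_num) (by linarith)
        have hpowj₀ : 2*L ≤ (2:ℝ)^(j₀:ℕ) := by
          have h1 : 2*L = (2:ℝ)^(Real.logb 2 (2*L)) :=
            (Real.rpow_logb (by norm_num) (by norm_num) (by linarith)).symm
          rw [h1, ← Real.rpow_natCast (2:ℝ) j₀]
          exact (Real.rpow_le_rpow_left_iff (by norm_num)).mpr (Nat.le_ceil _)
        have hj₀lt : (j₀:ℝ) < Real.logb 2 K + 1 := by
          have h1 : (j₀:ℝ) < Real.logb 2 (2*L) + 1 := Nat.ceil_lt_add_one hlogpos.le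
          have h2 : Real.logb 2 (2*L) < Real.logb 2 K :=
            Real.logb_lt_logb (by norm_num) (by linarith) (by linarith)
          linarith
        have hj₀K : j₀ ≤ K - 1 := by
          have h1 : (j₀:ℝ) < (K:ℝ) - 2 := by linarith
          have h2 : ((K - 2:ℕ):ℝ) = (K:ℝ) - 2 := by
            push_cast [Nat.cast_sub (show 2 ≤ K by omega)]
            ring
          have : j₀ < K - 2 := by exact_mod_cast h2 ▸ h1
          omega
        -- lower bound on x₀
        have hbs := backSqrt hρ h0 hK0 hdec hK1 htel ht0 j₀ (by omega)
        have hrpow : (0.707:ℝ) ≤ t ^ ((1:ℝ)/2^j₀) := by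
          have hpospow : (0:ℝ) < (2:ℝ)^(j₀:ℕ) := by positivity
          have he1 : t ^ ((1:ℝ)/2^j₀) = (2:ℝ) ^ (Real.logb 2 t * (1/2^j₀)) := by
            rw [← Real.rpow_logb (show (0:ℝ) < 2 by norm_num) (by norm_num) ht0]
            rw [← Real.rpow_mul (by norm_num : (0:ℝ) ≤ 2)]
            rw [Real.rpow_logb (show (0:ℝ) < 2 by norm_num) (by norm_num) ht0]
          have he2 : (-(1:ℝ))/2 ≤ Real.logb 2 t * (1/2^j₀) := by
            have : Real.logb 2 t * (1/2^j₀) = -(L / 2^j₀) := by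
              simp only [hLdef]
              field_simp
            rw [this]
            rw [neg_div, neg_le_neg_iff]
            rw [div_le_div_iff₀ hpospow (by norm_num : (0:ℝ) < 2)]
            linarith [hpowj₀]
          have he3 : (2:ℝ)^((-(1:ℝ))/2) ≤ (2:ℝ)^(Real.logb 2 t * (1/2^j₀)) :=
            (Real.rpow_le_rpow_left_iff (by norm_num)).mpr he2
          have he4 : (0.707:ℝ) ≤ (2:ℝ)^((-(1:ℝ))/2) := by
            have hsq : ((2:ℝ)^((-(1:ℝ))/2))^2 = 1/2 := by
              rw [sq, ← Real.rpow_add (by norm_num : (0:ℝ) < 2)]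
              rw [show (-(1:ℝ))/2 + (-(1:ℝ))/2 = -1 by ring, Real.rpow_neg_one]
              norm_num
            apply le_of_sq_le_sq
            · rw [hsq]; norm_num
            · positivity
          rw [he1]
          linarith
        have hwlt : t^2 < 1/4 := by nlinarith
        have hx₀ : (0.53:ℝ) ≤ V (K - j₀) := by
          have hb0 : (0:ℝ) ≤ t ^ ((1:ℝ)/2^j₀) := Real.rpow_nonneg ht0.le _
          have h34 : (3/4:ℝ) ≤ 1 - t^2 := by linarith
          have h1 : (0.707:ℝ) * (3/4) ≤ t ^ ((1:ℝ)/2^j₀) * (1 - t^2) :=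
            mul_le_mul hrpow h34 (by norm_num) hb0
          calc (0.53:ℝ) ≤ 0.707 * (3/4) := by norm_num
            _ ≤ t ^ ((1:ℝ)/2^j₀) * (1 - t^2) := h1
            _ ≤ V (K - j₀) := hbs
        have hx₀pos : 0 < V (K - j₀) := by linarith
        have hYx : 1 - V (K - j₀) ≤ (0.9:ℝ) * V (K - j₀) := by linarith
        have htail := tail_sum hρ h0 hK0 hdec hK1 htel hw1 hj₀K
          (Y := (0.9:ℝ)) (by norm_num) hx₀pos hYx
        have : (j₀:ℝ) + 2*(0.9:ℝ) ≤ Real.logb 2 K + 3 := by linarith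
        linarith

end Analysis4
end TCAux
namespace TCAux

section Analysis5

variable {K : ℕ} {ρ : ℝ} {V : ℕ → ℝ}

lemma delta_small (hK14 : 14 ≤ K) (hKbig : 8*(K:ℝ) ≤ (2:ℝ)^((K:ℝ)/2)) :
    (2:ℝ)^(-(K:ℝ)/2) ≤ 1/(8*(K:ℝ)) := by
  have hKpos : (0:ℝ) < K := by exact_mod_cast (show 0 < K by omega)
  have h8K : (0:ℝ) < 8*(K:ℝ) := by linarith
  have hinv : (2:ℝ)^(-(K:ℝ)/2) = 1/((2:ℝ)^((K:ℝ)/2)) := by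
    rw [show -(K:ℝ)/2 = -((K:ℝ)/2) by ring, Real.rpow_neg (by norm_num : (0:ℝ) ≤ 2)]
    rw [one_div]
  rw [hinv]
  exact one_div_le_one_div_of_le h8K hKbig

lemma delta_le (hK14 : 14 ≤ K) (hKbig : 8*(K:ℝ) ≤ (2:ℝ)^((K:ℝ)/2)) :
    (2:ℝ)^(-(K:ℝ)/2) ≤ 1/112 := by
  have h1 := delta_small hK14 hKbig
  have h2 : (112:ℝ) ≤ 8*(K:ℝ) := by
    have : (14:ℝ) ≤ (K:ℝ) := by exact_mod_cast hK14
    linarith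
  have : (1:ℝ)/(8*(K:ℝ)) ≤ 1/112 := one_div_le_one_div_of_le (by norm_num) h2
  linarith

lemma nat_succ_le_two_pow (n : ℕ) : ((n:ℝ)) + 1 ≤ (2:ℝ)^n := by
  induction n with
  | zero => norm_num
  | succ n ih =>
    have h1 : (1:ℝ) ≤ (2:ℝ)^n := one_le_pow₀ (by norm_num : (1:ℝ) ≤ 2)
    rw [pow_succ]
    push_cast
    nlinarith

set_option maxHeartbeats 1000000 in
lemma sum_V_le (hρ : 0 < ρ) (h0 : V 0 = 1) (hK0 : 0 ≤ V K)
    (hdec : ∀ k < K, V (k+1) ≤ V k)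
    (htel : ∀ k, 1 ≤ k → k ≤ K → V k = ρ*((V (k-1))^2 - (V K)^2))
    (hK14 : 14 ≤ K) (hKbig : 8*(K:ℝ) ≤ (2:ℝ)^((K:ℝ)/2))
    (hρle : ρ ≤ 1 - (2:ℝ)^(-(K:ℝ)/2)) :
    ∑ k ∈ Finset.Icc 1 K, V k ≤ (K:ℝ)/2 := by
  have hK1 : 1 ≤ K := by omega
  set δ : ℝ := (2:ℝ)^(-(K:ℝ)/2) with hδdef
  have hδpos : 0 < δ := Real.rpow_pos_of_pos (by norm_num) _
  have hδsmall : δ ≤ 1/112 := delta_le hK14 hKbig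
  -- per-term bound
  have Vb : ∀ k ≤ K, V k ≤ Real.exp (((2:ℝ)^k - 1) * (-δ)) := by
    intro k hk
    have h1 : V k ≤ ρ^(2^k - 1) := vpow hρ h0 hK0 hdec htel k hk
    have h2 : ρ^(2^k - 1) ≤ (1-δ)^(2^k - 1) := pow_le_pow_left₀ hρ.le hρle _
    have h3 : (1-δ)^(2^k-1) ≤ (Real.exp (-δ))^(2^k-1) := by
      apply pow_le_pow_left₀ (by linarith)
      linarith [Real.add_one_le_exp (-δ)]
    have h4 : (Real.exp (-δ))^(2^k-1) = Real.exp ((((2:ℕ)^k - 1 : ℕ):ℝ) * (-δ)) := by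
      rw [Real.exp_nat_mul]
    have h5 : (((2:ℕ)^k - 1 : ℕ):ℝ) = (2:ℝ)^k - 1 := by
      push_cast [Nat.one_le_two_pow]
      ring
    rw [h4, h5] at h3
    linarith
  set m : ℕ := (K+1)/2 with hmdef
  have hm7 : 7 ≤ m := by omega
  have hmK : m ≤ K := by omega
  have hmr1 : (K:ℝ)/2 ≤ (m:ℝ) := by
    have : K ≤ 2*m := by omega
    have := (Nat.cast_le (α := ℝ)).mpr this
    push_cast at this
    linarith
  have hmr2 : (m:ℝ) ≤ (K:ℝ)/2 + 1/2 := by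
    have : 2*m ≤ K + 1 := by omega
    have := (Nat.cast_le (α := ℝ)).mpr this
    push_cast at this
    linarith
  -- bound on middle term V (m-1)
  have hδm : (1:ℝ)/2 ≤ δ * 2^(m-1) := by
    have hcast : ((m-1:ℕ):ℝ) = (m:ℝ) - 1 := by
      push_cast [Nat.cast_sub (show 1 ≤ m by omega)]
      ring
    have he : δ * 2^(m-1) = (2:ℝ)^(-(K:ℝ)/2 + ((m-1:ℕ):ℝ)) := by
      rw [hδdef, ← Real.rpow_natCast (2:ℝ) (m-1), ← Real.rpow_add (by norm_num : (0:ℝ) < 2)]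
    rw [he]
    have h1 : (-1:ℝ) ≤ -(K:ℝ)/2 + ((m-1:ℕ):ℝ) := by
      rw [hcast]
      linarith
    calc (1:ℝ)/2 = (2:ℝ)^(-1:ℝ) := by rw [Real.rpow_neg_one]; norm_num
      _ ≤ (2:ℝ)^(-(K:ℝ)/2 + ((m-1:ℕ):ℝ)) := (Real.rpow_le_rpow_left_iff (by norm_num)).mpr h1
  have hmid : V (m-1) ≤ 0.68 := by
    have h1 := Vb (m-1) (by omega)
    have h2 : ((2:ℝ)^(m-1) - 1) * (-δ) ≤ -0.49 := by
      nlinarith [hδm, hδsmall, hδpos]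
    have h3 : Real.exp (((2:ℝ)^(m-1) - 1) * (-δ)) ≤ Real.exp (-0.49) :=
      Real.exp_le_exp.mpr h2
    have h4 : Real.exp (-0.49:ℝ) ≤ 0.68 := by
      have h5 : (1.49:ℝ) ≤ Real.exp (0.49) := by linarith [Real.add_one_le_exp (0.49:ℝ)]
      have h6 : Real.exp (-0.49:ℝ) = (Real.exp 0.49)⁻¹ := Real.exp_neg _
      rw [h6]
      have h7 : (Real.exp (0.49:ℝ))⁻¹ ≤ (1.49:ℝ)⁻¹ :=
        inv_anti₀ (by norm_num) h5
      calc (Real.exp (0.49:ℝ))⁻¹ ≤ (1.49:ℝ)⁻¹ := h7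
        _ ≤ 0.68 := by norm_num
    linarith
  -- tail bound
  set r : ℝ := Real.exp (-1) with hrdef
  have hr0 : 0 < r := Real.exp_pos _
  have hr37 : r ≤ 0.37 := by
    have h5 : (2.71:ℝ) ≤ Real.exp 1 := by linarith [Real.exp_one_gt_d9]
    have h6 : r = (Real.exp 1)⁻¹ := Real.exp_neg _
    rw [h6]
    calc (Real.exp (1:ℝ))⁻¹ ≤ (2.71:ℝ)⁻¹ := inv_anti₀ (by norm_num) h5
      _ ≤ 0.37 := by norm_num
  have hexpδ : Real.exp δ ≤ 1.01 := by
    have h1 : (111/112:ℝ) ≤ Real.exp (-δ) := by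
      linarith [Real.add_one_le_exp (-δ)]
    have h2 : Real.exp δ = (Real.exp (-δ))⁻¹ := by
      rw [Real.exp_neg, inv_inv]
    rw [h2]
    calc (Real.exp (-δ))⁻¹ ≤ ((111/112:ℝ))⁻¹ := inv_anti₀ (by norm_num) h1
      _ ≤ 1.01 := by norm_num
  have htailb : ∀ k ∈ Finset.Icc m K, V k ≤ (Real.exp δ * Real.exp ((m:ℝ)-1)) * r^k := by
    intro k hk
    obtain ⟨hkm, hkK⟩ := Finset.mem_Icc.mp hk
    have h1 := Vb k hkK
    have hd2k : ((k:ℝ) - (m:ℝ)) + 1 ≤ δ * (2:ℝ)^k := by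
      have hcast : ((k-m:ℕ):ℝ) = (k:ℝ) - m := by
        push_cast [Nat.cast_sub hkm]
        ring
      have he : δ * (2:ℝ)^k = (2:ℝ)^(-(K:ℝ)/2 + (k:ℝ)) := by
        rw [hδdef, ← Real.rpow_natCast (2:ℝ) k, ← Real.rpow_add (by norm_num : (0:ℝ) < 2)]
      have h2 : (2:ℝ)^((k-m:ℕ):ℝ) ≤ (2:ℝ)^(-(K:ℝ)/2 + (k:ℝ)) := by
        apply (Real.rpow_le_rpow_left_iff (by norm_num)).mpr
        rw [hcast]
        linarith
      have h3 : ((k-m:ℕ):ℝ) + 1 ≤ (2:ℝ)^((k-m:ℕ):ℝ) := by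
        rw [Real.rpow_natCast]
        exact nat_succ_le_two_pow (k-m)
      rw [he]
      rw [hcast] at h3 h2
      linarith
    have h4 : ((2:ℝ)^k - 1) * (-δ) ≤ δ + ((m:ℝ)-1) + (k:ℝ)*(-1) := by
      nlinarith [hd2k]
    have h5 : Real.exp (((2:ℝ)^k - 1) * (-δ)) ≤ Real.exp (δ + ((m:ℝ)-1) + (k:ℝ)*(-1)) :=
      Real.exp_le_exp.mpr h4
    have h6 : Real.exp (δ + ((m:ℝ)-1) + (k:ℝ)*(-1)) = (Real.exp δ * Real.exp ((m:ℝ)-1)) * r^k := by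
      rw [Real.exp_add, Real.exp_add, hrdef, ← Real.exp_nat_mul]
    rw [h6] at h5
    linarith
  have hr1 : r < 1 := by nlinarith
  have hgeomr : ∑ k ∈ Finset.Icc m K, r^k ≤ r^m / (1-r) := by
    have hg := geom_sum_Ico (x:=r) hr1.ne (show m ≤ K+1 by omega)
    rw [Finset.Ico_add_one_right_eq_Icc] at hg
    have hg2 : ∑ k ∈ Finset.Icc m K, r^k = (r^m - r^(K+1))/(1-r) := by
      rw [hg, show r^m - r^(K+1) = -(r^(K+1)-r^m) by ring,
        show (1:ℝ)-r = -(r-1) by ring, neg_div_neg_eq]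
    rw [hg2]
    apply (div_le_div_iff_of_pos_right (by linarith : (0:ℝ) < 1 - r)).mpr
    nlinarith [pow_nonneg hr0.le (K+1)]
  have htail : ∑ k ∈ Finset.Icc m K, V k ≤ 0.6 := by
    have h1 : ∑ k ∈ Finset.Icc m K, V k ≤ (Real.exp δ * Real.exp ((m:ℝ)-1)) * ∑ k ∈ Finset.Icc m K, r^k := by
      rw [Finset.mul_sum]
      exact Finset.sum_le_sum htailb
    have hc : (0:ℝ) ≤ Real.exp δ * Real.exp ((m:ℝ)-1) := by positivity
    have h2 : (Real.exp δ * Real.exp ((m:ℝ)-1)) * ∑ k ∈ Finset.Icc m K, r^k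
        ≤ (Real.exp δ * Real.exp ((m:ℝ)-1)) * (r^m/(1-r)) := by
      apply mul_le_mul_of_nonneg_left hgeomr hc
    have h3 : Real.exp ((m:ℝ)-1) * r^m = r := by
      rw [hrdef, ← Real.exp_nat_mul, ← Real.exp_add]
      congr 1
      push_cast
      ring
    have hnum : Real.exp δ * Real.exp ((m:ℝ)-1) * r^m = Real.exp δ * r := by
      rw [mul_assoc, h3]
    have h4 : (Real.exp δ * Real.exp ((m:ℝ)-1)) * (r^m/(1-r)) = Real.exp δ * (r/(1-r)) := by
      calc (Real.exp δ * Real.exp ((m:ℝ)-1)) * (r^m/(1-r))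
          = (Real.exp δ * Real.exp ((m:ℝ)-1) * r^m)/(1-r) := by ring
        _ = (Real.exp δ * r)/(1-r) := by rw [hnum]
        _ = Real.exp δ * (r/(1-r)) := by ring
    have h5 : r/(1-r) ≤ 0.59 := by
      rw [div_le_iff₀ (by nlinarith)]
      nlinarith
    have h6 : Real.exp δ * (r/(1-r)) ≤ 1.01 * 0.59 := by
      apply mul_le_mul hexpδ h5 (div_nonneg hr0.le (by linarith)) (by norm_num)
    calc ∑ k ∈ Finset.Icc m K, V k ≤ (Real.exp δ * Real.exp ((m:ℝ)-1)) * (r^m/(1-r)) := le_trans h1 h2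
      _ = Real.exp δ * (r/(1-r)) := h4
      _ ≤ 1.01 * 0.59 := h6
      _ ≤ 0.6 := by norm_num
  -- head
  have hhead : ∑ k ∈ Finset.Icc 1 (m-2), V k ≤ ((m:ℝ) - 2) := by
    have hb := Finset.sum_le_card_nsmul (Finset.Icc 1 (m-2)) V 1 (by
      intro x hx
      obtain ⟨hx1, hx2⟩ := Finset.mem_Icc.mp hx
      exact le_one h0 hdec x (by omega))
    have hcard : (Finset.Icc 1 (m-2)).card = m-2 := by rw [Nat.card_Icc]; omega
    rw [hcard] at hb
    have : ((m-2:ℕ):ℝ) = (m:ℝ) - 2 := by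
      push_cast [Nat.cast_sub (show 2 ≤ m by omega)]
      ring
    rw [← this]
    simpa using hb
  -- split
  have hsplit : ∑ k ∈ Finset.Icc 1 K, V k
      = ∑ k ∈ Finset.Icc 1 (m-2), V k + V (m-1) + ∑ k ∈ Finset.Icc m K, V k := by
    have e1 : Finset.Icc 1 K = Finset.Ioc 0 K := Icc1_eq K
    have e2 : Finset.Icc 1 (m-2) = Finset.Ioc 0 (m-2) := Icc1_eq (m-2)
    have e3 : Finset.Icc m K = Finset.Ioc (m-1) K := by
      ext x
      simp [Finset.mem_Icc, Finset.mem_Ioc]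
      omega
    have e4 : Finset.Ioc (m-2) (m-1) = {m-1} := by
      ext x
      simp [Finset.mem_Ioc, Finset.mem_singleton]
      omega
    rw [e1, e2, e3]
    rw [← Finset.sum_Ioc_consecutive V (show 0 ≤ m-2 by omega) (show m-2 ≤ K by omega)]
    rw [← Finset.sum_Ioc_consecutive V (show m-2 ≤ m-1 by omega) (show m-1 ≤ K by omega)]
    rw [e4, Finset.sum_singleton]
    ring
  rw [hsplit]
  have : (m:ℝ) - 2 + 0.68 + 0.6 ≤ (K:ℝ)/2 := by linarith
  linarith

end Analysis5
end TCAux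
namespace TCAux

section Analysis6

variable {K : ℕ} {ρ : ℝ} {V : ℕ → ℝ}

set_option maxHeartbeats 1000000 in
lemma p_bound (hρ : 0 < ρ) (h0 : V 0 = 1) (hK0 : 0 ≤ V K)
    (hdec : ∀ k < K, V (k+1) ≤ V k)
    (htel : ∀ k, 1 ≤ k → k ≤ K → V k = ρ*((V (k-1))^2 - (V K)^2))
    (hK14 : 14 ≤ K) (hKbig : 8*(K:ℝ) ≤ (2:ℝ)^((K:ℝ)/2))
    (hρ1 : ρ ≤ 1) (hρδ : 1 - (2:ℝ)^(-(K:ℝ)/2) ≤ ρ) :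
    (1 - V 1) + V K ≤ 4 * Real.sqrt K * (2:ℝ)^(-(K:ℝ)/2) := by
  have hK1 : 1 ≤ K := by omega
  set δ : ℝ := (2:ℝ)^(-(K:ℝ)/2) with hδdef
  have hδpos : 0 < δ := Real.rpow_pos_of_pos (by norm_num) _
  have hδ8K : δ ≤ 1/(8*(K:ℝ)) := delta_small hK14 hKbig
  have hKpos : (0:ℝ) < K := by exact_mod_cast (show 0 < K by omega)
  have hK1r : (1:ℝ) ≤ K := by exact_mod_cast hK1
  set t := V K with htdef
  have ht1 : t ≤ 1 := le_one h0 hdec K le_rfl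
  have hδ2 : δ^2 = (2:ℝ)^(-(K:ℝ)) := by
    rw [sq, hδdef, ← Real.rpow_add (by norm_num : (0:ℝ) < 2)]
    congr 1
    ring
  have hsqK1 : (1:ℝ) ≤ Real.sqrt (2*K) := Real.one_le_sqrt.mpr (by linarith)
  -- main bound on t
  have hT : t ≤ Real.sqrt (2*(K:ℝ)) * δ := by
    by_contra hcon
    push_neg at hcon
    have ht0 : 0 < t := lt_trans (by positivity) hcon
    have hw : 2*(K:ℝ)*δ^2 < t^2 := by
      have h1 : (Real.sqrt (2*(K:ℝ)) * δ)^2 < t^2 := by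
        apply pow_lt_pow_left₀ hcon (by positivity)
        norm_num
      rw [mul_pow, Real.sq_sqrt (by linarith : (0:ℝ) ≤ 2*(K:ℝ))] at h1
      linarith
    have hc : t ≤ (V 1)^(2^(K-1)) := by
      have := v1chain hρ h0 hK0 hdec hK1 htel K hK1 le_rfl
      rw [← htdef] at this
      exact this
    have h1eq : V 1 = ρ * (1 - t^2) := by
      have h := htel 1 le_rfl hK1
      rw [h0] at h
      simpa using h
    have hV10 : 0 ≤ V 1 := nonneg hK0 hdec 1 hK1
    have hV1le : V 1 ≤ 1 - t^2 := by nlinarith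
    have hchain : (V 1)^(2^(K-1)) ≤ (Real.exp (-t^2))^(2^(K-1)) := by
      apply pow_le_pow_left₀ hV10
      calc V 1 ≤ 1 - t^2 := hV1le
        _ ≤ Real.exp (-t^2) := by linarith [Real.add_one_le_exp (-t^2)]
    have hexp : (Real.exp (-t^2))^(2^(K-1)) = Real.exp (((2^(K-1):ℕ):ℝ) * (-t^2)) := by
      rw [Real.exp_nat_mul]
    have hKexp : ((2^(K-1):ℕ):ℝ) * t^2 > (K:ℝ) := by
      have hc1 : ((2^(K-1):ℕ):ℝ) = (2:ℝ)^(K-1) := by push_cast; ring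
      have hc2 : (2:ℝ)^(K-1) * 2 = (2:ℝ)^K := by
        rw [← pow_succ]
        congr 1
        omega
      have hc3 : (2:ℝ)^K * δ^2 = 1 := by
        rw [hδ2, ← Real.rpow_natCast (2:ℝ) K, ← Real.rpow_add (by norm_num : (0:ℝ) < 2)]
        rw [show (K:ℝ) + -(K:ℝ) = 0 by ring]
        exact Real.rpow_zero 2
      have h2 : ((2^(K-1):ℕ):ℝ) * t^2 > (2:ℝ)^(K-1) * (2*(K:ℝ)*δ^2) := by
        rw [hc1]
        apply mul_lt_mul_of_pos_left hw (by positivity)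
      have h3 : (2:ℝ)^(K-1) * (2*(K:ℝ)*δ^2) = (K:ℝ) * ((2:ℝ)^K * δ^2) := by
        rw [← hc2]; ring
      rw [h3, hc3, mul_one] at h2
      exact h2
    have hlast : t ≤ Real.exp (-(K:ℝ)) := by
      calc t ≤ (V 1)^(2^(K-1)) := hc
        _ ≤ (Real.exp (-t^2))^(2^(K-1)) := hchain
        _ = Real.exp (((2^(K-1):ℕ):ℝ) * (-t^2)) := hexp
        _ ≤ Real.exp (-(K:ℝ)) := by
            apply Real.exp_le_exp.mpr
            nlinarith [hKexp]
    have hδexp : Real.exp (-(K:ℝ)) < δ := by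
      rw [hδdef, Real.rpow_def_of_pos (by norm_num : (0:ℝ) < 2)]
      apply Real.exp_lt_exp.mpr
      have hlog2 : Real.log 2 ≤ 1 := by
        linarith [Real.log_le_sub_one_of_pos (by norm_num : (0:ℝ) < 2)]
      have hlog2' : 0 < Real.log 2 := Real.log_pos (by norm_num)
      have : Real.log 2 * (-(K:ℝ)/2) ≥ -(K:ℝ)/2 * 1 := by nlinarith
      nlinarith
    have : t < t := by
      calc t ≤ Real.exp (-(K:ℝ)) := hlast
        _ < δ := hδexp
        _ ≤ Real.sqrt (2*(K:ℝ)) * δ := le_mul_of_one_le_left hδpos.le hsqK1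
        _ < t := hcon
    exact absurd this (lt_irrefl t)
  -- conclude
  have ht2 : t^2 ≤ δ/4 := by
    have h1 : t^2 ≤ (Real.sqrt (2*(K:ℝ)) * δ)^2 := by
      have ht0 : 0 ≤ t := hK0
      nlinarith
    rw [mul_pow, Real.sq_sqrt (by linarith : (0:ℝ) ≤ 2*(K:ℝ))] at h1
    have h2 : 2*(K:ℝ)*δ^2 ≤ δ/4 := by
      have : 2*(K:ℝ)*δ ≤ 1/4 := by
        have := mul_le_mul_of_nonneg_left hδ8K (by linarith : (0:ℝ) ≤ 2*(K:ℝ))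
        calc 2*(K:ℝ)*δ ≤ 2*(K:ℝ)*(1/(8*(K:ℝ))) := this
          _ = 1/4 := by field_simp; ring
      nlinarith [hδpos]
    linarith
  have hV1ge : 1 - V 1 ≤ δ + t^2 := by
    have h1eq : V 1 = ρ * (1 - t^2) := by
      have h := htel 1 le_rfl hK1
      rw [h0] at h
      simpa using h
    have h1 : (1-δ) * (1-t^2) ≤ V 1 := by
      rw [h1eq]
      apply mul_le_mul_of_nonneg_right hρδ (by nlinarith)
    nlinarith [hδpos, sq_nonneg t]
  have hsqrt2 : Real.sqrt 2 ≤ 1.5 := by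
    nlinarith [Real.sq_sqrt (show (0:ℝ) ≤ 2 by norm_num), Real.sqrt_nonneg 2]
  have hsqrtK : 1 ≤ Real.sqrt (K:ℝ) := Real.one_le_sqrt.mpr (by exact_mod_cast hK1)
  have hsplit : Real.sqrt (2*(K:ℝ)) = Real.sqrt 2 * Real.sqrt (K:ℝ) :=
    Real.sqrt_mul (by norm_num) _
  have hkey : Real.sqrt 2 * Real.sqrt (K:ℝ) * δ + (5/4) * δ ≤ 4 * Real.sqrt (K:ℝ) * δ := by
    have h1 : (4 - Real.sqrt 2) * (Real.sqrt (K:ℝ) * δ) ≥ (5/2) * (1 * δ) := by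
      apply mul_le_mul (by linarith) (by nlinarith [hδpos]) (by linarith [hδpos]) (by linarith)
    nlinarith [hδpos]
  calc (1 - V 1) + t ≤ (δ + t^2) + Real.sqrt (2*(K:ℝ)) * δ := by linarith
    _ ≤ δ + δ/4 + Real.sqrt 2 * Real.sqrt (K:ℝ) * δ := by rw [← hsplit]; linarith
    _ ≤ 4 * Real.sqrt (K:ℝ) * δ := by linarith [hkey]

end Analysis6
end TCAux

set_option maxHeartbeats 1000000 in
/-- if `s ∈ [K/2 + λ/μ, K − log₂ K − 3]`, then any `ρ > 0` with
`s = (λ/μ)ρ + Σ_{k=1}^K ν_{ρ,K}(k)` lies in `[1 − 2^{−K/2}, 1]`, and consequently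
`P(ρ, K) ≤ 4 √K 2^{−K/2}`. -/
theorem homogeneous_performance_interval (K : ℕ) (hK : 1 ≤ K)
    (lam mu : ℝ) (hlam : 0 < lam) (hmu : 0 < mu) (s : ℝ)
    (hs : s ∈ Set.Icc ((K : ℝ) / 2 + lam / mu) ((K : ℝ) - Real.logb 2 K - 3))
    (ρ : ℝ) (hρ : 0 < ρ)
    (heq : s = lam / mu * ρ + ∑ k ∈ Finset.Icc 1 K, nuV ρ K k) :
    ρ ∈ Set.Icc (1 - (2 : ℝ) ^ (-(K : ℝ) / 2)) 1 ∧
    propProblematic ρ K ≤ 4 * Real.sqrt K * (2 : ℝ) ^ (-(K : ℝ) / 2) := by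
  obtain ⟨hs1, hs2⟩ := hs
  have ha0 : 0 < lam / mu := div_pos hlam hmu
  have hKpos : (0:ℝ) < K := by exact_mod_cast hK
  have hlogb : Real.logb 2 K < (K:ℝ)/2 - 3 := by linarith
  have hKbig : 8*(K:ℝ) < (2:ℝ)^((K:ℝ)/2) := by
    have h1 : (K:ℝ) = 2 ^ (Real.logb 2 (K:ℝ)) :=
      (Real.rpow_logb (by norm_num) (by norm_num) hKpos).symm
    have h8 : (8:ℝ) = (2:ℝ)^(3:ℝ) := by
      rw [show (3:ℝ) = ((3:ℕ):ℝ) by norm_num, Real.rpow_natCast]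
      norm_num
    calc 8*(K:ℝ) = (2:ℝ)^(3:ℝ) * 2^(Real.logb 2 (K:ℝ)) := by rw [← h8]; nth_rewrite 1 [h1]; rfl
      _ = 2^(3 + Real.logb 2 (K:ℝ)) := (Real.rpow_add (by norm_num) _ _).symm
      _ < 2^((K:ℝ)/2) := (Real.rpow_lt_rpow_left_iff (by norm_num)).mpr (by linarith)
  have hK14 : 14 ≤ K := by
    by_contra hcon
    push_neg at hcon
    have h2 : (8*(K:ℝ))^2 < ((2:ℝ)^((K:ℝ)/2))^2 := by
      have h0' : (0:ℝ) ≤ 8*(K:ℝ) := by positivity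
      nlinarith
    have h3 : ((2:ℝ)^((K:ℝ)/2))^2 = (2:ℝ)^(K:ℝ) := by
      rw [sq, ← Real.rpow_add (by norm_num : (0:ℝ) < 2)]
      congr 1
      ring
    have h4 : (2:ℝ)^(K:ℝ) = ((2^K : ℕ):ℝ) := by
      rw [show ((K:ℕ):ℝ) = ((K:ℕ):ℝ) from rfl, Real.rpow_natCast]
      push_cast
      ring
    have h5 : ((64 * K^2 : ℕ):ℝ) < ((2^K:ℕ):ℝ) := by
      rw [← h4, ← h3]
      push_cast
      nlinarith [h2]
    have h6 : 64 * K^2 < 2^K := by exact_mod_cast h5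
    interval_cases K <;> norm_num at h6
  have hK2 : 2 ≤ K := by omega
  have hprof := Classical.epsilon_spec (TCAux.exists_profile ρ hρ K hK2)
  obtain ⟨h0, hdec, hK0, hrel⟩ := hprof
  have h0' : nuV ρ K 0 = 1 := h0
  have hdec' : ∀ k < K, nuV ρ K (k+1) ≤ nuV ρ K k := hdec
  have hK0' : 0 ≤ nuV ρ K K := hK0
  have hrel' : ∀ k, 1 ≤ k → k ≤ K →
      nuV ρ K k - nuV ρ K (k+1) = ρ*((nuV ρ K (k-1))^2 - (nuV ρ K k)^2) := hrel
  have htop : nuV ρ K (K+1) = 0 := by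
    simp [nuV, extProfile]
  have htel := TCAux.tel (V := nuV ρ K) (ρ := ρ) (by omega) hrel' htop
  have hδpos : (0:ℝ) < (2:ℝ)^(-(K:ℝ)/2) := Real.rpow_pos_of_pos (by norm_num) _
  have hlow : 1 - (2:ℝ)^(-(K:ℝ)/2) ≤ ρ := by
    by_contra hcc
    push_neg at hcc
    have hsum := TCAux.sum_V_le hρ h0' hK0' hdec' htel hK14 hKbig.le hcc.le
    have hρlt1 : ρ < 1 := by linarith
    have hmul : lam/mu * ρ < lam/mu := by
      have := mul_lt_mul_of_pos_left hρlt1 ha0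
      rw [mul_one] at this
      exact this
    linarith [heq, hs1, hsum]
  have hupp : ρ ≤ 1 := by
    by_contra hcc
    push_neg at hcc
    have hsume := TCAux.sum_e_le hρ h0' hK0' hdec' htel hcc.le hK14 hKbig.le
    have hsumid : ∑ k ∈ Finset.Icc 1 K, (1 - nuV ρ K k)
        = (K:ℝ) - ∑ k ∈ Finset.Icc 1 K, nuV ρ K k := by
      rw [Finset.sum_sub_distrib]
      congr 1
      rw [Finset.sum_const, Nat.card_Icc]
      simp
    have hge : (K:ℝ) - (Real.logb 2 K + 3) ≤ ∑ k ∈ Finset.Icc 1 K, nuV ρ K k := by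
      rw [hsumid] at hsume
      linarith
    have hpos : 0 < lam/mu * ρ := mul_pos ha0 hρ
    linarith [heq, hs2]
  refine ⟨⟨hlow, hupp⟩, ?_⟩
  have hP : propProblematic ρ K = (1 - nuV ρ K 1) + nuV ρ K K := rfl
  rw [hP]
  exact TCAux.p_bound hρ h0' hK0' hdec' htel hK14 hKbig.le hupp hlow
end
end

section
/- Let K ≥ 1 be an integer and let 0 < ρ < 1. Then the unique two-choice profile for (ρ, K) satisfies 1 − ρ ≤ P(ρ, K) ≤ 1 − ρ + 2ρ^{2^K − 1}. -/
open Finset Real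

noncomputable section

/-- for `0 < ρ < 1`, `1 − ρ ≤ P(ρ, K) ≤ 1 − ρ + 2 ρ^{2^K − 1}`. -/
theorem problematic_bounds_subcritical (K : ℕ) (hK : 1 ≤ K) (ρ : ℝ)
    (hρ0 : 0 < ρ) (hρ1 : ρ < 1)
    (v : Fin (K + 1) → ℝ) (hv : IsTwoChoiceProfile ρ K v) :
    1 - ρ ≤ (1 - extProfile K v 1) + extProfile K v K ∧
    (1 - extProfile K v 1) + extProfile K v K ≤ 1 - ρ + 2 * ρ ^ (2 ^ K - 1) := by
  obtain ⟨h0, hmono, hKnn, hrec⟩ := hv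
  set f := extProfile K v with hf
  have hK1 : f (K + 1) = 0 := by
    simp [hf, extProfile]
  -- antitone down to K
  have hanti : ∀ n, n ≤ K → f K ≤ f (K - n) := by
    intro n
    induction n with
    | zero => simp
    | succ m ih =>
      intro hm
      have h1 : f K ≤ f (K - m) := ih (by omega)
      have h2 : K - (m + 1) < K := by omega
      have h3 : K - (m + 1) + 1 = K - m := by omega
      have := hmono (K - (m + 1)) h2
      rw [h3] at this
      linarith
  have hle : ∀ j, j ≤ K → f K ≤ f j := by
    intro j hj
    have := hanti (K - j) (by omega)
    rwa [show K - (K - j) = j by omega] at this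
  have hnn : ∀ j, j ≤ K → 0 ≤ f j := fun j hj => le_trans hKnn (hle j hj)
  have hK1le : f K ≤ 1 := h0 ▸ hle 0 (by omega)
  -- telescoping: f k = ρ (f (k-1)^2 - f K ^2)
  have htel : ∀ n, ∀ k, 1 ≤ k → k ≤ K → K - k = n →
      f k = ρ * ((f (k - 1)) ^ 2 - (f K) ^ 2) := by
    intro n
    induction n with
    | zero =>
      intro k hk1 hkK hn
      have hkeq : k = K := by omega
      subst hkeq
      have := hrec k hk1 hkK
      rw [hK1] at this
      linarith
    | succ m ih =>
      intro k hk1 hkK hn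
      have h1 : f (k + 1) = ρ * ((f (k + 1 - 1)) ^ 2 - (f K) ^ 2) :=
        ih (k + 1) (by omega) (by omega) (by omega)
      rw [show k + 1 - 1 = k by omega] at h1
      have h2 := hrec k hk1 hkK
      nlinarith [h1, h2]
  -- bound f k ≤ ρ^(2^k - 1)
  have hbd : ∀ k, k ≤ K → f k ≤ ρ ^ (2 ^ k - 1) := by
    intro k
    induction k with
    | zero => intro _; simp [h0]
    | succ m ih =>
      intro hm
      have hm' : m ≤ K := by omega
      have h1 : f (m + 1) = ρ * ((f m) ^ 2 - (f K) ^ 2) :=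
        htel (K - (m + 1)) (m + 1) (by omega) hm rfl
      have h2 : f m ≤ ρ ^ (2 ^ m - 1) := ih hm'
      have h3 : 0 ≤ f m := hnn m hm'
      have h4 : (0:ℝ) ≤ f K := hKnn
      have hexp : 2 ^ (m + 1) - 1 = 1 + (2 ^ m - 1) + (2 ^ m - 1) := by
        have : 1 ≤ 2 ^ m := Nat.one_le_two_pow
        omega
      have h5 : ρ ^ (2 ^ (m + 1) - 1) = ρ * (ρ ^ (2 ^ m - 1) * ρ ^ (2 ^ m - 1)) := by
        rw [hexp, pow_add, pow_add, pow_one]; ring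
      have h6 : (0:ℝ) ≤ ρ ^ (2 ^ m - 1) := le_of_lt (pow_pos hρ0 _)
      rw [h1, h5]
      have h7 : f m * f m ≤ ρ ^ (2 ^ m - 1) * ρ ^ (2 ^ m - 1) := mul_le_mul h2 h2 h3 h6
      nlinarith [sq_nonneg (f K), hρ0.le]
  -- specific facts
  have h1eq : f 1 = ρ * (1 - (f K) ^ 2) := by
    have := htel (K - 1) 1 le_rfl hK rfl
    simpa [h0] using this
  have hKbd : f K ≤ ρ ^ (2 ^ K - 1) := hbd K le_rfl
  have hbpos : (0:ℝ) ≤ ρ ^ (2 ^ K - 1) := le_of_lt (pow_pos hρ0 _)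
  constructor
  · rw [h1eq]; nlinarith [hKnn]
  · rw [h1eq]; nlinarith [hKnn, hK1le, hKbd, hbpos]
end
end

section
/- Let K ≥ 1 be an integer, let 0 < ρ < 1 and set S(ρ, K) := Σ_{k=1}^{K} ρ^{2^k − 1}. Then the unique two-choice profile for (ρ, K) satisfies S(ρ, K) − 2^{K+1} ρ^{2^{K+1} − 1} ≤ Σ_{k=1}^{K} ν_{ρ,K}(k) ≤ S(ρ, K). -/
open Finset Real

noncomputable section

/-- Sum of `2^k - 1` over `k ∈ [1, K]` is at most `2^(K+1)`. -/
lemma geom_sum_aux (K : ℕ) : ∑ k ∈ Finset.Icc 1 K, ((2 : ℝ) ^ k - 1) ≤ 2 ^ (K + 1) := by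
  induction K with
  | zero => simp
  | succ K ih =>
    rw [Finset.sum_Icc_succ_top (by omega)]
    have : (0:ℝ) < 2 ^ (K + 1) := by positivity
    calc (∑ k ∈ Finset.Icc 1 K, ((2 : ℝ) ^ k - 1)) + (2 ^ (K + 1) - 1)
        ≤ 2 ^ (K + 1) + (2 ^ (K + 1) - 1) := by linarith
      _ ≤ 2 ^ (K + 1 + 1) := by ring_nf; linarith

lemma main_aux (K : ℕ) (hK : 1 ≤ K) (ρ : ℝ) (hρ0 : 0 < ρ) (hρ1 : ρ < 1)
    (w : ℕ → ℝ) (h0 : w 0 = 1) (hmono : ∀ k < K, w (k + 1) ≤ w k)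
    (hK0 : 0 ≤ w K) (hend : w (K + 1) = 0)
    (hrec : ∀ k, 1 ≤ k → k ≤ K → w k - w (k + 1) = ρ * ((w (k - 1)) ^ 2 - (w k) ^ 2)) :
    (∑ k ∈ Finset.Icc 1 K, ρ ^ (2 ^ k - 1)) - (2 : ℝ) ^ (K + 1) * ρ ^ (2 ^ (K + 1) - 1) ≤
      ∑ k ∈ Finset.Icc 1 K, w k ∧
    ∑ k ∈ Finset.Icc 1 K, w k ≤ ∑ k ∈ Finset.Icc 1 K, ρ ^ (2 ^ k - 1) := by
  -- monotonicity
  have hmono' : ∀ j k : ℕ, j ≤ k → k ≤ K → w k ≤ w j := by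
    intro j k hjk
    induction k, hjk using Nat.le_induction with
    | base => intro _; exact le_refl _
    | succ k hk ih =>
      intro hkK
      exact le_trans (hmono k (by omega)) (ih (by omega))
  have hpos : ∀ k ≤ K, 0 ≤ w k := fun k hk => le_trans hK0 (hmono' k K hk le_rfl)
  -- telescoping identity
  have htel : ∀ d k : ℕ, k + d = K → 1 ≤ k → w k = ρ * ((w (k - 1)) ^ 2 - (w K) ^ 2) := by
    intro d
    induction d with
    | zero =>
      intro k hk hk1
      have hkK : k = K := by omega
      subst hkK
      have := hrec k hk1 le_rfl
      rw [hend] at this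
      linarith
    | succ d ih =>
      intro k hk hk1
      have h1 := ih (k + 1) (by omega) (by omega)
      simp only [Nat.add_sub_cancel] at h1
      have h2 := hrec k hk1 (by omega)
      have h3 : w k = ρ * ((w (k-1))^2 - (w k)^2) + ρ * ((w k)^2 - (w K)^2) := by
        linarith
      rw [h3]; ring
  -- per-term upper bound
  have hub : ∀ k : ℕ, 1 ≤ k → k ≤ K → w k ≤ ρ ^ (2 ^ k - 1) := by
    intro k hk
    induction k, hk using Nat.le_induction with
    | base =>
      intro h1K
      have h1 := htel (K - 1) 1 (by omega) le_rfl
      simp only [Nat.sub_self, h0] at h1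
      have hsq : 0 ≤ (w K) ^ 2 := sq_nonneg _
      have : ρ ^ (2 ^ 1 - 1) = ρ := by norm_num
      rw [this, h1]; nlinarith
    | succ k hk ih =>
      intro hkK
      have hwk := ih (by omega)
      have h1 := htel (K - (k+1)) (k + 1) (by omega) (by omega)
      simp only [Nat.add_sub_cancel] at h1
      have hwkpos : 0 ≤ w k := hpos k (by omega)
      have hsq : 0 ≤ (w K) ^ 2 := sq_nonneg _
      have hpow : ρ ^ (2 ^ (k + 1) - 1) = ρ * (ρ ^ (2 ^ k - 1)) ^ 2 := by
        rw [← pow_mul, ← pow_succ']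
        congr 1
        have : 1 ≤ 2 ^ k := Nat.one_le_two_pow
        omega
      rw [hpow, h1]
      have h2 : (w k) ^ 2 ≤ (ρ ^ (2 ^ k - 1)) ^ 2 := by
        apply pow_le_pow_left₀ hwkpos hwk
      nlinarith
  -- wK^2 bound
  have hwK : w K ≤ ρ ^ (2 ^ K - 1) := hub K hK le_rfl
  have hA : ρ * (w K) ^ 2 ≤ ρ ^ (2 ^ (K + 1) - 1) := by
    have h1 : (w K) ^ 2 ≤ (ρ ^ (2 ^ K - 1)) ^ 2 := pow_le_pow_left₀ hK0 hwK 2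
    have h2 : ρ * (ρ ^ (2 ^ K - 1)) ^ 2 = ρ ^ (2 ^ (K + 1) - 1) := by
      rw [← pow_mul, ← pow_succ']
      congr 1
      have : 1 ≤ 2 ^ K := Nat.one_le_two_pow
      omega
    nlinarith
  set A := ρ ^ (2 ^ (K + 1) - 1) with hAdef
  have hApos : 0 ≤ A := by positivity
  -- per-term error bound
  have heb : ∀ k : ℕ, 1 ≤ k → k ≤ K → ρ ^ (2 ^ k - 1) - w k ≤ ((2 : ℝ) ^ k - 1) * A := by
    intro k hk
    induction k, hk using Nat.le_induction with
    | base =>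
      intro h1K
      have h1 := htel (K - 1) 1 (by omega) le_rfl
      simp only [Nat.sub_self, h0] at h1
      have : ρ ^ (2 ^ 1 - 1) = ρ := by norm_num
      rw [this, h1]; nlinarith
    | succ k hk ih =>
      intro hkK
      have hek := ih (by omega)
      have hwk := hub k (by omega) (by omega)
      have hwkpos : 0 ≤ w k := hpos k (by omega)
      have h1 := htel (K - (k+1)) (k + 1) (by omega) (by omega)
      simp only [Nat.add_sub_cancel] at h1
      have hpow : ρ ^ (2 ^ (k + 1) - 1) = ρ * (ρ ^ (2 ^ k - 1)) ^ 2 := by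
        rw [← pow_mul, ← pow_succ']
        congr 1
        have : 1 ≤ 2 ^ k := Nat.one_le_two_pow
        omega
      have hu1 : ρ ^ (2 ^ k - 1) ≤ 1 := pow_le_one₀ (le_of_lt hρ0) (le_of_lt hρ1)
      have h4 : 0 ≤ ρ ^ (2 ^ k - 1) - w k := by linarith
      have h5 : ρ * (ρ ^ (2 ^ k - 1) + w k) ≤ 2 := by nlinarith
      have hkey : ρ * ((ρ ^ (2 ^ k - 1)) ^ 2 - (w k) ^ 2) ≤ 2 * (ρ ^ (2 ^ k - 1) - w k) := by
        calc ρ * ((ρ ^ (2 ^ k - 1)) ^ 2 - (w k) ^ 2)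
            = (ρ * (ρ ^ (2 ^ k - 1) + w k)) * (ρ ^ (2 ^ k - 1) - w k) := by ring
          _ ≤ 2 * (ρ ^ (2 ^ k - 1) - w k) := mul_le_mul_of_nonneg_right h5 h4
      have h2pow : ((2:ℝ) ^ (k+1) - 1) = 2 * ((2:ℝ)^k - 1) + 1 := by ring
      rw [hpow, h1, h2pow]
      nlinarith
  constructor
  · have h1 : ∑ k ∈ Finset.Icc 1 K, (ρ ^ (2 ^ k - 1) - w k) ≤
        ∑ k ∈ Finset.Icc 1 K, ((2:ℝ) ^ k - 1) * A := by
      apply Finset.sum_le_sum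
      intro k hk
      rw [Finset.mem_Icc] at hk
      exact heb k hk.1 hk.2
    rw [Finset.sum_sub_distrib, ← Finset.sum_mul] at h1
    have h2 : (∑ k ∈ Finset.Icc 1 K, ((2:ℝ) ^ k - 1)) * A ≤ 2 ^ (K + 1) * A :=
      mul_le_mul_of_nonneg_right (geom_sum_aux K) hApos
    linarith
  · apply Finset.sum_le_sum
    intro k hk
    rw [Finset.mem_Icc] at hk
    exact hub k hk.1 hk.2

/-- for `0 < ρ < 1` and `S(ρ,K) = Σ_{k=1}^K ρ^{2^k − 1}`,
`S(ρ,K) − 2^{K+1} ρ^{2^{K+1} − 1} ≤ Σ_{k=1}^K ν_{ρ,K}(k) ≤ S(ρ,K)`. -/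
theorem sum_profile_bounds_subcritical (K : ℕ) (hK : 1 ≤ K) (ρ : ℝ)
    (hρ0 : 0 < ρ) (hρ1 : ρ < 1)
    (v : Fin (K + 1) → ℝ) (hv : IsTwoChoiceProfile ρ K v) :
    (∑ k ∈ Finset.Icc 1 K, ρ ^ (2 ^ k - 1)) - (2 : ℝ) ^ (K + 1) * ρ ^ (2 ^ (K + 1) - 1) ≤
      ∑ k ∈ Finset.Icc 1 K, extProfile K v k ∧
    ∑ k ∈ Finset.Icc 1 K, extProfile K v k ≤ ∑ k ∈ Finset.Icc 1 K, ρ ^ (2 ^ k - 1) := by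
  obtain ⟨h0, hmono, hK0, hrec⟩ := hv
  have hend : extProfile K v (K + 1) = 0 := by
    simp [extProfile]
  exact main_aux K hK ρ hρ0 hρ1 (extProfile K v) h0 hmono hK0 hend hrec
end
end

section
/- Let K ≥ 1 be an integer and let 0 < ρ ≤ 1. Then the unique two-choice profile u = ν_{ρ,K} satisfies u_1 ≤ ρ, the quantity ε := ρ − u_1 satisfies 0 ≤ ε ≤ ρ^{2^{K+1} − 1}, and u_k ≤ ρ^{2^k − 1} for every 1 ≤ k ≤ K. -/
open Finset Real

noncomputable section

/-- for `0 < ρ ≤ 1`, the unique two-choice profile `u = ν_{ρ,K}` satisfies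
`u_1 ≤ ρ`, `0 ≤ ε := ρ − u_1 ≤ ρ^{2^{K+1} − 1}`, and `u_k ≤ ρ^{2^k − 1}` for `1 ≤ k ≤ K`. -/
theorem profile_upper_bounds (K : ℕ) (hK : 1 ≤ K) (ρ : ℝ)
    (hρ0 : 0 < ρ) (hρ1 : ρ ≤ 1)
    (u : Fin (K + 1) → ℝ) (hu : IsTwoChoiceProfile ρ K u) :
    extProfile K u 1 ≤ ρ ∧
    0 ≤ ρ - extProfile K u 1 ∧
    ρ - extProfile K u 1 ≤ ρ ^ (2 ^ (K + 1) - 1) ∧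
    ∀ k, 1 ≤ k → k ≤ K → extProfile K u k ≤ ρ ^ (2 ^ k - 1) := by
  obtain ⟨h0, hmono, hKnn, hrec⟩ := hu
  set w := extProfile K u with hw
  have hKp1 : w (K + 1) = 0 := by simp [hw, extProfile]
  -- nonnegativity from monotonicity
  have hchain : ∀ d j, j + d ≤ K → w (j + d) ≤ w j := by
    intro d
    induction d with
    | zero => intro j _; simp
    | succ d ih =>
      intro j h
      have h1 : w (j + d + 1) ≤ w (j + d) := hmono _ (by omega)
      have h2 : w (j + d) ≤ w j := ih j (by omega)
      calc w (j + (d + 1)) = w (j + d + 1) := by ring_nf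
        _ ≤ w j := le_trans h1 h2
  have hnn : ∀ j, j ≤ K → 0 ≤ w j := by
    intro j hj
    have h1 := hchain (K - j) j (by omega)
    rw [show j + (K - j) = K by omega] at h1
    linarith
  -- key telescoping identity: w j = ρ (w (j-1)² - w K²)
  have hkey : ∀ m j, 1 ≤ j → j ≤ K → K - j = m →
      w j = ρ * (w (j - 1) ^ 2 - w K ^ 2) := by
    intro m
    induction m with
    | zero =>
      intro j h1 h2 h3
      have hj : K = j := by omega
      have h5 := hrec j h1 (by omega)
      rw [hj] at hKp1 ⊢
      rw [hKp1] at h5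
      linarith
    | succ m ih =>
      intro j h1 h2 h3
      have h4 := ih (j + 1) (by omega) (by omega) (by omega)
      have h5 := hrec j h1 h2
      simp only [Nat.add_sub_cancel] at h4
      linear_combination h5 + h4
  -- upper bounds by induction
  have hub : ∀ k, 1 ≤ k → k ≤ K → w k ≤ ρ ^ (2 ^ k - 1) := by
    intro k hk
    induction k, hk using Nat.le_induction with
    | base =>
      intro h2
      have h4 := hkey (K - 1) 1 le_rfl hK rfl
      simp only [Nat.sub_self] at h4
      rw [h0] at h4
      norm_num
      nlinarith [sq_nonneg (w K), mul_nonneg hρ0.le (sq_nonneg (w K))]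
    | succ k hk ih =>
      intro h2
      have ihb := ih (by omega)
      have ihnn := hnn k (by omega)
      have h4 := hkey (K - (k + 1)) (k + 1) (by omega) h2 rfl
      simp only [Nat.add_sub_cancel] at h4
      have hexp : ρ ^ (2 ^ (k + 1) - 1) = ρ * (ρ ^ (2 ^ k - 1)) ^ 2 := by
        rw [← pow_mul, ← pow_succ']
        congr 1
        have h2k : 1 ≤ 2 ^ k := Nat.one_le_two_pow
        have h2k1 : 2 ^ (k + 1) = 2 ^ k * 2 := pow_succ 2 k
        omega
      have hsq : w k ^ 2 ≤ (ρ ^ (2 ^ k - 1)) ^ 2 := by nlinarith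
      rw [hexp]
      nlinarith [sq_nonneg (w K), mul_nonneg hρ0.le (sq_nonneg (w K)),
        mul_le_mul_of_nonneg_left hsq hρ0.le]
  have hubK := hub K hK le_rfl
  have hub1 := hub 1 le_rfl hK
  have hnnK := hnn K le_rfl
  have hw1 : w 1 = ρ * (1 - w K ^ 2) := by
    have h4 := hkey (K - 1) 1 le_rfl hK rfl
    simp only [Nat.sub_self] at h4
    rw [h0] at h4
    linarith [h4]
  have h2K1 : ρ ^ (2 ^ (K + 1) - 1) = ρ * (ρ ^ (2 ^ K - 1)) ^ 2 := by
    rw [← pow_mul, ← pow_succ']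
    congr 1
    have h2k : 1 ≤ 2 ^ K := Nat.one_le_two_pow
    have h2k1 : 2 ^ (K + 1) = 2 ^ K * 2 := pow_succ 2 K
    omega
  refine ⟨?_, ?_, ?_, fun k h1 h2 => hub k h1 h2⟩
  · have h5 : ρ ^ (2 ^ 1 - 1) = ρ := by norm_num
    rw [h5] at hub1
    exact hub1
  · nlinarith [sq_nonneg (w K), mul_nonneg hρ0.le (sq_nonneg (w K))]
  · rw [h2K1]
    have hsqK : w K ^ 2 ≤ (ρ ^ (2 ^ K - 1)) ^ 2 := by nlinarith
    nlinarith [mul_le_mul_of_nonneg_left hsqK hρ0.le]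
end
end

section
/- Let K ≥ 1 be an integer and let 0 < ρ ≤ 1. Then the unique two-choice profile u = ν_{ρ,K} satisfies, with ε := ρ − u_1, the lower bound u_k ≥ max(ρ^{2^k − 1} − 2^k ε, 0) for every 1 ≤ k ≤ K. -/
open Finset Real

noncomputable section

/-- for `0 < ρ ≤ 1` and `ε := ρ − u_1`, the unique two-choice profile
satisfies `u_k ≥ max(ρ^{2^k − 1} − 2^k ε, 0)` for every `1 ≤ k ≤ K`. -/
theorem profile_lower_bounds (K : ℕ) (hK : 1 ≤ K) (ρ : ℝ)
    (hρ0 : 0 < ρ) (hρ1 : ρ ≤ 1)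
    (u : Fin (K + 1) → ℝ) (hu : IsTwoChoiceProfile ρ K u) :
    ∀ k, 1 ≤ k → k ≤ K →
      max (ρ ^ (2 ^ k - 1) - (2 : ℝ) ^ k * (ρ - extProfile K u 1)) 0 ≤
        extProfile K u k := by
  set w : ℕ → ℝ := extProfile K u with hw
  rw [IsTwoChoiceProfile, show extProfile K u = w from rfl] at hu
  obtain ⟨h0, hmono, hKnn, hrec⟩ := hu
  -- value beyond K is 0
  have hzero : w (K + 1) = 0 := by
    simp [hw, extProfile]
  -- nonnegativity up to K
  have hnn : ∀ k, k ≤ K → 0 ≤ w k := by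
    have key : ∀ d k, k + d = K → 0 ≤ w k := by
      intro d
      induction d with
      | zero =>
        intro k hk
        have : k = K := by omega
        rw [this]; exact hKnn
      | succ d ih =>
        intro k hk
        have hkK : k < K := by omega
        have h1 : 0 ≤ w (k + 1) := ih (k + 1) (by omega)
        have h2 := hmono k hkK
        linarith
    intro k hk
    exact key (K - k) k (by omega)
  -- the summed recursion
  have hQ : ∀ k, 1 ≤ k → k ≤ K + 1 → w k = ρ * w (k - 1) ^ 2 - ρ * w K ^ 2 := by
    have key : ∀ d k, k + d = K + 1 → 1 ≤ k → w k = ρ * w (k - 1) ^ 2 - ρ * w K ^ 2 := by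
      intro d
      induction d with
      | zero =>
        intro k hk _
        have : k = K + 1 := by omega
        subst this
        simp [hzero]
      | succ d ih =>
        intro k hk h1
        have hkK : k ≤ K := by omega
        have hIH : w (k + 1) = ρ * w k ^ 2 - ρ * w K ^ 2 := by
          have := ih (k + 1) (by omega) (by omega)
          simpa using this
        have hr := hrec k h1 hkK
        have : w k = w (k + 1) + ρ * (w (k - 1) ^ 2 - w k ^ 2) := by linarith
        rw [hIH] at this
        linarith
    intro k h1 h2
    exact key (K + 1 - k) k (by omega) h1
  -- epsilon
  set ε : ℝ := ρ - w 1 with hε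
  have hw1 : w 1 = ρ - ρ * w K ^ 2 := by
    have := hQ 1 le_rfl (by omega)
    simpa [h0] using this
  have hεval : ε = ρ * w K ^ 2 := by rw [hε, hw1]; ring
  have hεnn : 0 ≤ ε := by
    rw [hεval]
    positivity
  -- the one-step recursion in terms of ε
  have hstep : ∀ k, k ≤ K → w (k + 1) = ρ * w k ^ 2 - ε := by
    intro k hk
    have := hQ (k + 1) (by omega) (by omega)
    simpa [hεval] using this
  -- main induction: sharper bound with coefficient 2^k - 1
  have main : ∀ k, 1 ≤ k → k ≤ K →
      ρ ^ (2 ^ k - 1) - ((2 : ℝ) ^ k - 1) * ε ≤ w k := by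
    intro k h1
    induction k, h1 using Nat.le_induction with
    | base =>
      intro _
      have : w 1 = ρ - ε := by rw [hε]; ring
      rw [this]
      norm_num
    | succ k hk1 ih =>
      intro hk1K
      have hkK : k ≤ K := by omega
      have hIH := ih hkK
      set a : ℝ := ρ ^ (2 ^ k - 1) with ha
      set c : ℝ := (2 : ℝ) ^ k with hc
      have ha0 : 0 ≤ a := by positivity
      have ha1 : a ≤ 1 := pow_le_one₀ hρ0.le hρ1
      have hc1 : (1 : ℝ) ≤ c := one_le_pow₀ (by norm_num)
      have hpow : ρ ^ (2 ^ (k + 1) - 1) = ρ * a ^ 2 := by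
        rw [ha, ← pow_mul, ← pow_succ']
        congr 1
        have h1 : 1 ≤ 2 ^ k := Nat.one_le_two_pow
        omega
      have hcpow : (2 : ℝ) ^ (k + 1) = 2 * c := by rw [hc]; ring
      have hwk1 : w (k + 1) = ρ * w k ^ 2 - ε := hstep k hkK
      rw [hpow, hcpow, hwk1]
      have hwknn : 0 ≤ w k := hnn k hkK
      rcases le_or_gt 0 (a - (c - 1) * ε) with hcase | hcase
      · -- the bound from IH is nonnegative
        have hsq : (a - (c - 1) * ε) ^ 2 ≤ w k ^ 2 := by
          apply sq_le_sq' <;> nlinarith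
        have hρa : ρ * a ≤ 1 := by nlinarith
        nlinarith [mul_nonneg (mul_nonneg (sub_nonneg.2 hc1) hεnn) (sub_nonneg.2 hρa),
          mul_nonneg (mul_nonneg hρ0.le (sq_nonneg (c - 1))) (sq_nonneg ε)]
      · -- the bound is negative, use nonnegativity of w (k+1)
        have hwk1nn : 0 ≤ w (k + 1) := hnn (k + 1) hk1K
        rw [hwk1] at hwk1nn
        nlinarith
  intro k h1 h2
  apply max_le
  · have := main k h1 h2
    have h2k : (0 : ℝ) ≤ (2 : ℝ) ^ k := by positivity
    linarith
  · exact hnn k h2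
end
end

section
/- Let K ≥ 1 be an integer and let ρ > 1. Then the unique two-choice profile for (ρ, K) satisfies √(1 − 1/ρ) ≤ P(ρ, K) ≤ √(1 − 1/ρ) + K 2^{−K} (1 + 1/(2√(ρ(ρ − 1)))). -/
open Finset Real

noncomputable section

lemma aux_two_mul (n : ℕ) (hn : 1 ≤ n) : 2*((n:ℝ)+1) ≤ 2^(n+1) := by
  have : 2*(n+1) ≤ 2^(n+1) := by
    induction n with
    | zero => omega
    | succ m ih =>
      rcases Nat.eq_zero_or_pos m with hm | hm
      · subst hm; norm_num
      · have h1 := ih hm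
        have h2 : 2 ≤ 2^(m+1) := by
          calc 2 ≤ 2*(m+1) := by omega
            _ ≤ 2^(m+1) := h1
        calc 2*(m+1+1) = 2*(m+1) + 2 := by ring
          _ ≤ 2^(m+1) + 2^(m+1) := by omega
          _ = 2^(m+1+1) := by ring
  calc 2*((n:ℝ)+1) = ((2*(n+1) : ℕ) : ℝ) := by push_cast; ring
    _ ≤ ((2^(n+1) : ℕ) : ℝ) := by exact_mod_cast this
    _ = 2^(n+1) := by push_cast; ring

lemma aux_pow_le (n : ℕ) (hn : 1 ≤ n) : (2:ℝ)^(n+1) ≤ ((n:ℝ)+1) * Real.exp n := by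
  have he : (2:ℝ) ≤ Real.exp 1 := by have := Real.add_one_le_exp (1:ℝ); linarith
  induction n with
  | zero => omega
  | succ m ih =>
    rcases Nat.eq_zero_or_pos m with hm | hm
    · subst hm; norm_num
      calc (4:ℝ) = 2*2 := by norm_num
        _ ≤ 2 * Real.exp 1 := by nlinarith
    · have ihm := ih hm
      have hem : (0:ℝ) < Real.exp m := Real.exp_pos _
      have hee : Real.exp (((m:ℕ):ℝ)+1) = Real.exp m * Real.exp 1 := by rw [← Real.exp_add]
      have key : 2 * (((m:ℕ):ℝ)+1) ≤ Real.exp 1 * (((m:ℕ):ℝ)+1+1) := by nlinarith [Nat.cast_nonneg (α := ℝ) m]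
      push_cast
      rw [pow_succ, hee]
      push_cast at ihm
      calc (2:ℝ)^(m+1) * 2 ≤ (((m:ℕ):ℝ)+1) * Real.exp m * 2 := by nlinarith
        _ ≤ (((m:ℕ):ℝ)+1+1) * (Real.exp m * Real.exp 1) := by nlinarith [mul_le_mul_of_nonneg_right key hem.le]

set_option maxHeartbeats 2000000 in
/-- for `ρ > 1`,
`√(1 − 1/ρ) ≤ P(ρ, K) ≤ √(1 − 1/ρ) + K 2^{−K}(1 + 1/(2√(ρ(ρ − 1))))`. -/
theorem problematic_bounds_supercritical (K : ℕ) (hK : 1 ≤ K) (ρ : ℝ) (hρ : 1 < ρ)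
    (v : Fin (K + 1) → ℝ) (hv : IsTwoChoiceProfile ρ K v) :
    Real.sqrt (1 - 1 / ρ) ≤ (1 - extProfile K v 1) + extProfile K v K ∧
    (1 - extProfile K v 1) + extProfile K v K ≤
      Real.sqrt (1 - 1 / ρ) +
        (K : ℝ) * (2 : ℝ) ^ (-(K : ℤ)) * (1 + 1 / (2 * Real.sqrt (ρ * (ρ - 1)))) := by
  obtain ⟨hV0, hVmono, hVKnn, hVrec⟩ := hv
  set V : ℕ → ℝ := extProfile K v with hVdef
  have hVtop : V (K+1) = 0 := by rw [hVdef]; simp [extProfile]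
  clear_value V
  have hρ0 : (0:ℝ) < ρ := by linarith
  -- monotonicity
  have hmono' : ∀ k, k ≤ K → ∀ j, j ≤ k → V k ≤ V j := by
    intro k
    induction k with
    | zero => intro _ j hj; interval_cases j; exact le_rfl
    | succ m ih =>
      intro hm j hj
      have h1 : V (m+1) ≤ V m := hVmono m (by omega)
      rcases Nat.lt_or_ge j (m+1) with hj' | hj'
      · exact h1.trans (ih (by omega) j (by omega))
      · have : j = m + 1 := by omega
        subst this; exact le_rfl
  have hle1 : ∀ k, k ≤ K → V k ≤ 1 := by
    intro k hk; have := hmono' k hk 0 (Nat.zero_le _); rwa [hV0] at this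
  have hnn : ∀ k, k ≤ K → 0 ≤ V k := by
    intro k hk; exact le_trans hVKnn (hmono' K le_rfl k hk)
  set q : ℝ := V K with hqdef
  clear_value q
  have hq0 : 0 ≤ q := hVKnn
  -- telescoping
  have htel : ∀ k, 1 ≤ k → k ≤ K → V k = ρ * ((V (k-1))^2 - q^2) := by
    suffices h : ∀ d k, 1 ≤ k → k + d = K → V k = ρ * ((V (k-1))^2 - q^2) by
      intro k h1 hk2; exact h (K - k) k h1 (by omega)
    intro d
    induction d with
    | zero =>
      intro k h1 hk2
      have hkK : k = K := by omega
      rw [hkK]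
      have hr := hVrec K (by omega) le_rfl
      rw [hVtop] at hr
      rw [← hqdef] at hr ⊢
      linarith
    | succ d ih =>
      intro k h1 hk2
      have hA := ih (k+1) (by omega) (by omega)
      have hr := hVrec k h1 (by omega)
      rw [Nat.add_sub_cancel] at hA
      linarith
  have hVq : V 1 = ρ * (1 - q^2) := by
    have h := htel 1 le_rfl hK
    rw [show (1:ℕ)-1 = 0 from rfl, hV0] at h
    simpa using h
  set ε : ℝ := ρ * q^2 - ρ + 1 with hεdef
  clear_value ε
  have hP1 : 1 - V 1 = ε := by rw [hVq, hεdef]; ring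
  have hε0 : 0 ≤ ε := by
    have h1 := hle1 1 hK
    rw [hVq] at h1
    rw [hεdef]; nlinarith
  -- step inequality
  have hstep : ∀ k, 1 ≤ k → k ≤ K → V k ≤ (V (k-1))^2 - ε := by
    intro k h1 hk
    have h := htel k h1 hk
    have hx1 : V (k-1) ≤ 1 := hle1 _ (by omega)
    have hx0 : 0 ≤ V (k-1) := hnn _ (by omega)
    rw [h, hεdef]
    nlinarith [mul_nonneg (by linarith : (0:ℝ) ≤ ρ - 1) (by nlinarith : (0:ℝ) ≤ 1 - (V (k-1))^2)]
  -- the key bound ε ≤ K 2^{-K}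
  have hεK : ε ≤ (K:ℝ) * ((2:ℝ)^K)⁻¹ := by
    rcases eq_or_lt_of_le hK with hK1 | hK2
    · -- K = 1
      have hK1' : K = 1 := hK1.symm
      subst hK1'
      have heq : ρ * (1 - q^2) = q := by rw [← hVq, hqdef]
      have hfac : (2*q-1)*(2*ρ*q+ρ+2) = 3*ρ-2 := by linear_combination (-4) * heq
      have hpos : 0 < 2*ρ*q+ρ+2 := by nlinarith
      have h2q : 0 < 2*q-1 := by
        rcases lt_trichotomy (2*q-1) 0 with h | h | h
        · nlinarith
        · nlinarith
        · exact h
      rw [hεdef]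
      norm_num
      nlinarith
    · -- K ≥ 2
      obtain ⟨n, rfl⟩ : ∃ n, K = n + 1 := ⟨K - 1, by omega⟩
      have hn : 1 ≤ n := by omega
      by_contra hcon
      push_neg at hcon
      have h2pos : (0:ℝ) < 2^(n+1) := by positivity
      have hεpos : 0 < ε := lt_of_le_of_lt (by positivity) hcon
      have hexple : Real.exp (-ε) ≤ 1 := by
        rw [show (1:ℝ) = Real.exp 0 from (Real.exp_zero).symm]
        exact Real.exp_le_exp.2 (by linarith)
      have he1 : 1 - ε ≤ Real.exp (-ε) := by
        have := Real.add_one_le_exp (-ε); linarith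
      -- inductive exp bound
      have hind : ∀ k, k ≤ n → V k ≤ Real.exp (-(ε * (2^k - 1))) := by
        intro k
        induction k with
        | zero => intro _; rw [hV0]; norm_num
        | succ m ih =>
          intro hm
          have hm' : m ≤ n := by omega
          have ihm := ih hm'
          have h1 : V (m+1) ≤ (V m)^2 - ε := by
            have := hstep (m+1) (by omega) (by omega)
            simpa using this
          have hx1 : V m ≤ 1 := hle1 m (by omega)
          have hx0 : 0 ≤ V m := hnn m (by omega)
          have hsq1 : (V m)^2 ≤ 1 := by nlinarith
          have h2 : (V m)^2 - ε ≤ (V m)^2 * Real.exp (-ε) := by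
            nlinarith [mul_nonneg (by linarith : (0:ℝ) ≤ 1 - (V m)^2)
              (by linarith : (0:ℝ) ≤ 1 - Real.exp (-ε))]
          have h3 : (V m)^2 * Real.exp (-ε) ≤ (Real.exp (-(ε * (2^m - 1))))^2 * Real.exp (-ε) := by
            have := pow_le_pow_left₀ hx0 ihm 2
            exact mul_le_mul_of_nonneg_right this (Real.exp_pos _).le
          have h4 : (Real.exp (-(ε * (2^m - 1))))^2 * Real.exp (-ε) = Real.exp (-(ε * (2^(m+1) - 1))) := by
            rw [pow_two, ← Real.exp_add, ← Real.exp_add]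
            congr 1
            rw [pow_succ]
            ring
          calc V (m+1) ≤ (V m)^2 - ε := h1
            _ ≤ (V m)^2 * Real.exp (-ε) := h2
            _ ≤ (Real.exp (-(ε * (2^m - 1))))^2 * Real.exp (-ε) := h3
            _ = Real.exp (-(ε * (2^(m+1) - 1))) := h4
      have hfin : ε ≤ (V n)^2 := by
        have h1 := hstep (n+1) (by omega) le_rfl
        rw [Nat.add_sub_cancel] at h1
        have h2 : 0 ≤ V (n+1) := hnn (n+1) le_rfl
        linarith
      have hVn := hind n le_rfl
      have hVn0 : 0 ≤ V n := hnn n (by omega)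
      have hfin2 : ε ≤ Real.exp (-(ε * (2^(n+1) - 2))) := by
        calc ε ≤ (V n)^2 := hfin
          _ ≤ (Real.exp (-(ε * (2^n - 1))))^2 := pow_le_pow_left₀ hVn0 hVn 2
          _ = Real.exp (-(ε * (2^(n+1) - 2))) := by
              rw [pow_two, ← Real.exp_add]
              congr 1
              rw [pow_succ]
              ring
      have h2K := aux_two_mul n hn
      have hKr : ((n:ℝ)+1) * ((2:ℝ)^(n+1))⁻¹ < ε := by
        have hc : ((n+1 : ℕ):ℝ) = (n:ℝ)+1 := by push_cast; ring
        rw [← hc]; exact hcon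
      have hfactor : (0:ℝ) ≤ 2^(n+1) - 2 := by
        have hn1 : (1:ℝ) ≤ (n:ℝ) := by exact_mod_cast hn
        nlinarith
      have hge : (n:ℝ) ≤ ε * (2^(n+1) - 2) := by
        have hmul := mul_le_mul_of_nonneg_right hKr.le hfactor
        have e1 : ((n:ℝ)+1)*((2:ℝ)^(n+1))⁻¹*((2:ℝ)^(n+1) - 2) = ((n:ℝ)+1) - 2*(((n:ℝ)+1)*((2:ℝ)^(n+1))⁻¹) := by
          field_simp
        have e2 : 2*(((n:ℝ)+1)*((2:ℝ)^(n+1))⁻¹) ≤ 1 := by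
          have h : ((2:ℝ)*((n:ℝ)+1))*((2:ℝ)^(n+1))⁻¹ ≤ 1 := by
            rw [← div_eq_mul_inv, div_le_one h2pos]
            exact h2K
          linarith [h, mul_assoc (2:ℝ) ((n:ℝ)+1) (((2:ℝ)^(n+1))⁻¹)]
        rw [e1] at hmul
        linarith
      have hmono2 : Real.exp (-(ε * (2^(n+1) - 2))) ≤ Real.exp (-(n:ℝ)) :=
        Real.exp_le_exp.2 (by linarith)
      have hExp : Real.exp (-(n:ℝ)) ≤ ((n:ℝ)+1) * ((2:ℝ)^(n+1))⁻¹ := by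
        have h := aux_pow_le n hn
        have hepos : (0:ℝ) < Real.exp n := Real.exp_pos _
        rw [Real.exp_neg, inv_le_iff_one_le_mul₀ hepos]
        calc (1:ℝ) = 2^(n+1) * ((2:ℝ)^(n+1))⁻¹ := by field_simp
          _ ≤ (((n:ℝ)+1) * Real.exp n) * ((2:ℝ)^(n+1))⁻¹ := by
              apply mul_le_mul_of_nonneg_right h (by positivity)
          _ = ((n:ℝ)+1) * ((2:ℝ)^(n+1))⁻¹ * Real.exp n := by ring
      have hcontr : ε ≤ ((n:ℝ)+1) * ((2:ℝ)^(n+1))⁻¹ := le_trans (le_trans hfin2 hmono2) hExp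
      exact absurd hcontr (not_le.2 hKr)
  -- assemble the final bounds
  have hα : (0:ℝ) < 1 - 1/ρ := by
    have : 1/ρ < 1 := by rw [div_lt_one hρ0]; linarith
    linarith
  have hsα : 0 < Real.sqrt (1 - 1/ρ) := Real.sqrt_pos.2 hα
  set sα : ℝ := Real.sqrt (1 - 1/ρ) with hsαdef
  have hsα2 : sα^2 = 1 - 1/ρ := Real.sq_sqrt hα.le
  clear_value sα
  have hq2 : 1 - 1/ρ ≤ q^2 := by
    have key : q^2 - (1-1/ρ) = ε/ρ := by rw [hεdef]; field_simp; ring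
    have h2 : 0 ≤ ε/ρ := div_nonneg hε0 hρ0.le
    linarith
  have hsαq : sα ≤ q := by
    rw [hsαdef, show q = Real.sqrt (q^2) from (Real.sqrt_sq hq0).symm]
    exact Real.sqrt_le_sqrt hq2
  constructor
  · -- lower bound
    -- q already in goal
    linarith [hP1, hε0, hsαq]
  · -- upper bound
    -- q already in goal
    have hsρ : Real.sqrt (ρ*(ρ-1)) = ρ * sα := by
      rw [show ρ*(ρ-1) = ρ^2*(1-1/ρ) by field_simp, Real.sqrt_mul (sq_nonneg ρ),
        Real.sqrt_sq hρ0.le, hsαdef]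
    have hρsα2 : ρ * sα^2 = ρ - 1 := by rw [hsα2]; field_simp
    have hqsub : (q - sα) * (2*ρ*sα) ≤ ε := by
      rw [hεdef]
      nlinarith [mul_nonneg hρ0.le (sq_nonneg (q - sα))]
    have h2ρsα : (0:ℝ) < 2*ρ*sα := by positivity
    have hq_le : q - sα ≤ ε / (2*ρ*sα) := (le_div_iff₀ h2ρsα).2 hqsub
    have hzpow : ((2:ℝ))^(-(K:ℤ)) = ((2:ℝ)^K)⁻¹ := by
      rw [zpow_neg, zpow_natCast]
    rw [hzpow, hsρ]
    have hfrac0 : (0:ℝ) ≤ 1 + 1/(2*(ρ*sα)) := by positivity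
    have h5 : ε * (1 + 1/(2*(ρ*sα))) ≤ (K:ℝ)*((2:ℝ)^K)⁻¹ * (1 + 1/(2*(ρ*sα))) :=
      mul_le_mul_of_nonneg_right hεK hfrac0
    have hre : ε * (1 + 1/(2*(ρ*sα))) = ε + ε/(2*ρ*sα) := by ring
    linarith [hP1, hq_le, h5, hre]
end
end
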